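/- arXiv:1401.7514 — 11 statements merged into one kernel-verified Lean document; each statement's English description precedes it below -/
import Mathlib

section
/- Let G be a non-trivial connected simple graph with maximum degree Δ and minimum degree δ. If Δ − δ ≤ 3 and G is not isomorphic to the star K_{1,4} nor to the tree T* on eight vertices obtained by joining the central vertices of two copies of K_{1,3} by an edge, then GA(G) > ABC(G). -/
open SimpleGraph

/-- The first geometric-arithmetic index of a finite simple graph:
`GA(G) = Σ_{uv ∈ E(G)} 2√(dᵤ dᵥ)/(dᵤ + dᵥ)`. -/
noncomputable def GA {V : Type*} [Finite V] (G : SimpleGraph V) : ℝ := by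
  classical
  have : Fintype V := Fintype.ofFinite V
  exact ∑ e ∈ G.edgeFinset,
    Sym2.lift ⟨fun u v =>
      2 * Real.sqrt ((G.degree u : ℝ) * (G.degree v : ℝ)) /
        ((G.degree u : ℝ) + (G.degree v : ℝ)),
      fun u v => by
        dsimp only; rw [mul_comm ((G.degree u : ℝ)), add_comm ((G.degree u : ℝ))]⟩ e

/-- The atom-bond connectivity index of a finite simple graph:
`ABC(G) = Σ_{uv ∈ E(G)} √((dᵤ + dᵥ - 2)/(dᵤ dᵥ))`. -/
noncomputable def ABC {V : Type*} [Finite V] (G : SimpleGraph V) : ℝ := by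
  classical
  have : Fintype V := Fintype.ofFinite V
  exact ∑ e ∈ G.edgeFinset,
    Sym2.lift ⟨fun u v =>
      Real.sqrt (((G.degree u : ℝ) + (G.degree v : ℝ) - 2) /
        ((G.degree u : ℝ) * (G.degree v : ℝ))),
      fun u v => by
        dsimp only; rw [mul_comm ((G.degree u : ℝ)), add_comm ((G.degree u : ℝ))]⟩ e

/-- The degree of a vertex (classical wrapper around `SimpleGraph.degree`). -/
noncomputable def deg {V : Type*} [Finite V] (G : SimpleGraph V) (v : V) : ℕ := by
  classical
  have : Fintype V := Fintype.ofFinite V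
  exact G.degree v

/-- The maximum degree `Δ` of a finite simple graph. -/
noncomputable def maxDeg {V : Type*} [Finite V] (G : SimpleGraph V) : ℕ := by
  classical
  have : Fintype V := Fintype.ofFinite V
  exact G.maxDegree

/-- The minimum degree `δ` of a finite simple graph. -/
noncomputable def minDeg {V : Type*} [Finite V] (G : SimpleGraph V) : ℕ := by
  classical
  have : Fintype V := Fintype.ofFinite V
  exact G.minDegree

/-- The star `K_{1,4}`: the vertex `0` is joined to the four leaves `1,2,3,4`. -/
def starK14 : SimpleGraph (Fin 5) := SimpleGraph.fromRel (fun u _ => u = 0)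

/-- The tree `T*` on eight vertices obtained by joining the central vertices `0` and `4`
of two copies of `K_{1,3}` by an edge. -/
def Tstar : SimpleGraph (Fin 8) :=
  SimpleGraph.fromEdgeSet {s(0,1), s(0,2), s(0,3), s(0,4), s(4,5), s(4,6), s(4,7)}

/-! ### Auxiliary material for the proof -/

namespace DasT

/-- Per-edge difference: GA-term minus ABC-term. -/
noncomputable def F (a b : ℕ) : ℝ :=
  2 * Real.sqrt ((a:ℝ) * (b:ℝ)) / ((a:ℝ) + (b:ℝ)) -
    Real.sqrt (((a:ℝ) + (b:ℝ) - 2) / ((a:ℝ) * (b:ℝ)))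

lemma F_symm (a b : ℕ) : F a b = F b a := by
  unfold F; rw [mul_comm ((a:ℝ)), add_comm ((a:ℝ))]

lemma F_pos_of_key {a b : ℕ} (ha : 1 ≤ a) (hb : 1 ≤ b)
    (key : ((a:ℝ) + b)^2 * ((a:ℝ) + b - 2) < 4 * ((a:ℝ) * b)^2) : 0 < F a b := by
  have ha' : (1:ℝ) ≤ (a:ℝ) := by exact_mod_cast ha
  have hb' : (1:ℝ) ≤ (b:ℝ) := by exact_mod_cast hb
  have hA : (0:ℝ) < (a:ℝ) * b := by nlinarith
  have hS : (0:ℝ) < (a:ℝ) + b := by nlinarith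
  rw [F, sub_pos]
  have hy : (0:ℝ) < 2 * Real.sqrt ((a:ℝ) * b) / ((a:ℝ) + b) := by
    have := Real.sqrt_pos.mpr hA
    positivity
  rw [Real.sqrt_lt' hy]
  have hsq : (2 * Real.sqrt ((a:ℝ) * b) / ((a:ℝ) + b))^2 = 4 * ((a:ℝ)*b) / ((a:ℝ)+b)^2 := by
    rw [div_pow, mul_pow, Real.sq_sqrt hA.le]; ring
  rw [hsq, div_lt_div_iff₀ hA (by positivity)]
  nlinarith [key]

lemma F_pos {a b : ℕ} (ha : 1 ≤ a) (hb : 1 ≤ b) (h1 : b ≤ a + 3) (h2 : a ≤ b + 3)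
    (h3 : ¬(a = 1 ∧ b = 4)) (h4 : ¬(a = 4 ∧ b = 1)) : 0 < F a b := by
  apply F_pos_of_key ha hb
  rcases Nat.lt_or_ge a 2 with haa | haa
  · have : a = 1 := by omega
    subst this
    have : b = 1 ∨ b = 2 ∨ b = 3 := by omega
    rcases this with rfl | rfl | rfl <;> norm_num
  · rcases Nat.lt_or_ge b 2 with hbb | hbb
    · have : b = 1 := by omega
      subst this
      have : a = 2 ∨ a = 3 := by omega
      rcases this with rfl | rfl <;> norm_num
    · have ha' : (2:ℝ) ≤ (a:ℝ) := by exact_mod_cast haa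
      have hb' : (2:ℝ) ≤ (b:ℝ) := by exact_mod_cast hbb
      have h1' : (b:ℝ) ≤ (a:ℝ) + 3 := by exact_mod_cast h1
      have h2' : (a:ℝ) ≤ (b:ℝ) + 3 := by exact_mod_cast h2
      nlinarith [mul_nonneg (sub_nonneg.mpr ha') (sub_nonneg.mpr hb'),
        sq_nonneg ((a:ℝ) - b), sq_nonneg ((a:ℝ) + b - 4),
        mul_nonneg (mul_nonneg (sub_nonneg.mpr ha') (sub_nonneg.mpr hb')) (sub_nonneg.mpr ha'),
        mul_nonneg (sub_nonneg.mpr (show (0:ℝ) ≤ (a:ℝ)+3 - b by linarith)) (sub_nonneg.mpr ha'),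
        mul_nonneg (sub_nonneg.mpr (show (0:ℝ) ≤ (b:ℝ)+3 - a by linarith)) (sub_nonneg.mpr hb')]

lemma sqrt_lt_of_sq {x y : ℝ} (hy : 0 < y) (h : x < y^2) : Real.sqrt x < y :=
  (Real.sqrt_lt' hy).mpr h

lemma lt_sqrt_of_sq {x y : ℝ} (h : y^2 < x) (hy : 0 ≤ y) : y < Real.sqrt x := by
  rwa [Real.lt_sqrt hy]

lemma F41_ge : -(0.0661:ℝ) ≤ F 4 1 := by
  have h1 : Real.sqrt ((4:ℝ)*1) = 2 := by
    rw [show (4:ℝ)*1 = 2^2 by norm_num, Real.sqrt_sq (by norm_num)]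
  have h2 : Real.sqrt (((4:ℝ)+1-2)/((4:ℝ)*1)) < 0.8661 := by
    apply sqrt_lt_of_sq (by norm_num); norm_num
  unfold F
  push_cast
  rw [h1]
  nlinarith [h2]

lemma F42_ge : (0.2356:ℝ) ≤ F 4 2 := by
  have h1 : (2.8284:ℝ) < Real.sqrt ((4:ℝ)*2) := by
    apply lt_sqrt_of_sq (by norm_num) (by norm_num)
  have h2 : Real.sqrt (((4:ℝ)+2-2)/((4:ℝ)*2)) < 0.7072 := by
    apply sqrt_lt_of_sq (by norm_num); norm_num
  unfold F; push_cast
  nlinarith [h1, h2]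

lemma F43_ge : (0.2356:ℝ) ≤ F 4 3 := by
  have h1 : (3.4641:ℝ) < Real.sqrt ((4:ℝ)*3) := by
    apply lt_sqrt_of_sq (by norm_num) (by norm_num)
  have h2 : Real.sqrt (((4:ℝ)+3-2)/((4:ℝ)*3)) < 0.6456 := by
    apply sqrt_lt_of_sq (by norm_num); norm_num
  unfold F; push_cast
  nlinarith [h1, h2]

lemma F44_ge : (0.3875:ℝ) ≤ F 4 4 := by
  have h1 : Real.sqrt ((4:ℝ)*4) = 4 := by
    rw [show (4:ℝ)*4 = 4^2 by norm_num, Real.sqrt_sq (by norm_num)]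
  have h2 : Real.sqrt (((4:ℝ)+4-2)/((4:ℝ)*4)) < 0.6124 := by
    apply sqrt_lt_of_sq (by norm_num); norm_num
  unfold F; push_cast
  rw [h1]
  nlinarith [h2]

lemma F4d_ge {d : ℕ} (h2 : 2 ≤ d) (h4 : d ≤ 4) : (0.2356:ℝ) ≤ F 4 d := by
  interval_cases d
  · exact F42_ge
  · exact F43_ge
  · linarith [F44_ge]

/-- Unfolded form of `GA` relative to ambient instances. -/
lemma GA_eq {V : Type*} [Fintype V] [DecidableEq V] (G : SimpleGraph V) [DecidableRel G.Adj] :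
    GA G = ∑ e ∈ G.edgeFinset,
    Sym2.lift ⟨fun u v =>
      2 * Real.sqrt ((G.degree u : ℝ) * (G.degree v : ℝ)) /
        ((G.degree u : ℝ) + (G.degree v : ℝ)),
      fun u v => by
        dsimp only; rw [mul_comm ((G.degree u : ℝ)), add_comm ((G.degree u : ℝ))]⟩ e := by
  unfold GA
  congr!

/-- Unfolded form of `ABC` relative to ambient instances. -/
lemma ABC_eq {V : Type*} [Fintype V] [DecidableEq V] (G : SimpleGraph V) [DecidableRel G.Adj] :
    ABC G = ∑ e ∈ G.edgeFinset,
    Sym2.lift ⟨fun u v =>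
      Real.sqrt (((G.degree u : ℝ) + (G.degree v : ℝ) - 2) /
        ((G.degree u : ℝ) * (G.degree v : ℝ))),
      fun u v => by
        dsimp only; rw [mul_comm ((G.degree u : ℝ)), add_comm ((G.degree u : ℝ))]⟩ e := by
  unfold ABC
  congr!

lemma maxDeg_eq {V : Type*} [Fintype V] (G : SimpleGraph V) [DecidableRel G.Adj] :
    maxDeg G = G.maxDegree := by
  unfold maxDeg
  congr!

lemma minDeg_eq {V : Type*} [Fintype V] (G : SimpleGraph V) [DecidableRel G.Adj] :
    minDeg G = G.minDegree := by
  unfold minDeg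
  congr!

open Finset in
/-- Rewriting an edge sum as a sum of vertex contributions. -/
lemma edge_sum_eq {V : Type*} [Fintype V] [DecidableEq V] (G : SimpleGraph V)
    [DecidableRel G.Adj] (W : V → V → ℝ) (f : Sym2 V → ℝ)
    (hWf : ∀ u v, G.Adj u v → W u v + W v u = f s(u, v)) :
    ∑ e ∈ G.edgeFinset, f e = ∑ u, ∑ v ∈ G.neighborFinset u, W u v := by
  have step1 : ∑ u, ∑ v ∈ G.neighborFinset u, W u v
      = ∑ p ∈ (univ ×ˢ univ).filter (fun p : V × V => G.Adj p.1 p.2), W p.1 p.2 := by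
    rw [Finset.sum_filter, Finset.sum_product]
    refine Finset.sum_congr rfl fun u _ => ?_
    rw [neighborFinset_eq_filter, Finset.sum_filter]
  rw [step1]
  have hmaps : ∀ p ∈ (univ ×ˢ univ).filter (fun p : V × V => G.Adj p.1 p.2),
      s(p.1, p.2) ∈ G.edgeFinset := by
    intro p hp
    simp only [Finset.mem_filter] at hp
    simpa [mem_edgeFinset] using hp.2
  rw [← Finset.sum_fiberwise_of_maps_to hmaps (fun p => W p.1 p.2)]
  refine Finset.sum_congr rfl fun e he => ?_
  induction e with
  | _ a b =>
    rw [mem_edgeFinset, mem_edgeSet] at he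
    have hab : a ≠ b := he.ne
    have hset : ((univ ×ˢ univ).filter (fun p : V × V => G.Adj p.1 p.2)).filter
        (fun p => s(p.1, p.2) = s(a, b)) = {(a, b), (b, a)} := by
      ext ⟨x, y⟩
      simp only [Finset.mem_filter, Finset.mem_product, Finset.mem_univ, true_and,
        Finset.mem_insert, Finset.mem_singleton, Sym2.eq_iff, Prod.mk.injEq]
      constructor
      · rintro ⟨_, (⟨rfl, rfl⟩ | ⟨rfl, rfl⟩)⟩
        · exact Or.inl ⟨rfl, rfl⟩
        · exact Or.inr ⟨rfl, rfl⟩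
      · rintro (⟨rfl, rfl⟩ | ⟨rfl, rfl⟩)
        · exact ⟨he, Or.inl ⟨rfl, rfl⟩⟩
        · exact ⟨he.symm, Or.inr ⟨rfl, rfl⟩⟩
    rw [hset, Finset.sum_pair (by simp [hab, Prod.ext_iff])]
    exact (hWf a b he).symm

lemma closure {V : Type*} (G : SimpleGraph V) (S : Set V)
    (hcl : ∀ a b, G.Adj a b → a ∈ S → b ∈ S) {x y : V} (p : G.Walk x y)
    (hx : x ∈ S) : y ∈ S := by
  induction p with
  | nil => exact hx
  | cons h _ ih => exact ih (hcl _ _ h hx)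

lemma leaf_neighbor {V : Type*} [Fintype V] [DecidableEq V] (G : SimpleGraph V)
    [DecidableRel G.Adj] {x u : V} (h1 : G.degree x = 1) (hadj : G.Adj x u) :
    G.neighborFinset x = {u} := by
  have hu : u ∈ G.neighborFinset x := by simpa using hadj
  have : (G.neighborFinset x).card = 1 := h1
  rw [Finset.card_eq_one] at this
  obtain ⟨y, hy⟩ := this
  rw [hy] at hu ⊢
  simp only [Finset.mem_singleton] at hu
  rw [hu]

open Finset in
/-- A connected graph with a vertex of degree 4 all of whose neighbours are leaves
is isomorphic to `K_{1,4}`. -/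
lemma K14_iso {V : Type*} [Fintype V] [DecidableEq V] (G : SimpleGraph V)
    [DecidableRel G.Adj] (hconn : G.Connected) (u : V) (h4 : G.degree u = 4)
    (hleaf : ∀ v ∈ G.neighborFinset u, G.degree v = 1) :
    Nonempty (G ≃g starK14) := by
  set N := G.neighborFinset u with hN
  have huN : u ∉ N := by simp [hN]
  have hcl : ∀ a b, G.Adj a b → a ∈ (insert u N : Finset V) → b ∈ (insert u N : Finset V) := by
    intro a b hab ha
    rw [Finset.mem_insert] at ha
    rcases ha with rfl | ha
    · exact Finset.mem_insert_of_mem (by simpa [hN] using hab)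
    · have h1 : G.degree a = 1 := hleaf a ha
      have hau : G.Adj a u := ((G.mem_neighborFinset u a).mp ha).symm
      have := leaf_neighbor G h1 hau
      have hb : b ∈ G.neighborFinset a := by simpa using hab
      rw [this, Finset.mem_singleton] at hb
      subst hb
      exact Finset.mem_insert_self _ _
  have hall : ∀ b, b ∈ (insert u N : Finset V) := by
    intro b
    obtain ⟨p⟩ := (hconn u b)
    exact closure G (fun x => x ∈ (insert u N : Finset V)) hcl p (Finset.mem_insert_self _ _)
  have hcard : Fintype.card V = 5 := by
    have huniv : (Finset.univ : Finset V) = insert u N := by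
      ext b; simp [hall b]
    rw [← Finset.card_univ, huniv, Finset.card_insert_of_notMem huN]
    simpa [hN] using h4
  have hadj : ∀ a b, G.Adj a b ↔ (a ≠ b ∧ (a = u ∨ b = u)) := by
    intro a b
    constructor
    · intro h
      refine ⟨h.ne, ?_⟩
      by_contra hc
      push_neg at hc
      obtain ⟨hau, hbu⟩ := hc
      have ha : a ∈ N := by
        have := hall a
        rw [Finset.mem_insert] at this
        tauto
      have h1 : G.degree a = 1 := hleaf a ha
      have hau' : G.Adj a u := ((G.mem_neighborFinset u a).mp ha).symm
      have := leaf_neighbor G h1 hau'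
      have hb : b ∈ G.neighborFinset a := by simpa using h
      rw [this, Finset.mem_singleton] at hb
      exact hbu hb
    · rintro ⟨hne, h | h⟩
      · have := hall b
        rw [Finset.mem_insert] at this
        rcases this with heq | hb
        · exact absurd (h.trans heq.symm) hne
        · rw [h]; exact (G.mem_neighborFinset u b).mp hb
      · have := hall a
        rw [Finset.mem_insert] at this
        rcases this with heq | ha
        · exact absurd (heq.trans h.symm) hne
        · rw [h]; exact ((G.mem_neighborFinset u a).mp ha).symm
  let e0 : V ≃ Fin 5 := Fintype.equivFinOfCardEq hcard
  let f : V ≃ Fin 5 := e0.trans (Equiv.swap (e0 u) 0)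
  have hfu : f u = 0 := by simp [f]
  refine ⟨⟨f, ?_⟩⟩
  intro a b
  show starK14.Adj (f a) (f b) ↔ G.Adj a b
  have hstar : ∀ x y : Fin 5, starK14.Adj x y ↔ (x ≠ y ∧ (x = 0 ∨ y = 0)) := by
    intro x y
    constructor
    · rintro ⟨hne, h | h⟩ <;> tauto
    · rintro ⟨hne, h⟩
      exact ⟨hne, by tauto⟩
  rw [hstar, hadj]
  have h0 : ∀ x : V, f x = 0 ↔ x = u := by
    intro x
    rw [← hfu]
    exact ⟨fun h => f.injective h, fun h => by rw [h]⟩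
  rw [h0, h0, ne_eq, EmbeddingLike.apply_eq_iff_eq]

set_option maxHeartbeats 1000000 in
lemma Tstar_adj_iff : ∀ x y : Fin 8, Tstar.Adj x y ↔
    ((x.val = 0 ∧ 1 ≤ y.val ∧ y.val ≤ 4) ∨ (y.val = 0 ∧ 1 ≤ x.val ∧ x.val ≤ 4) ∨
     (x.val = 4 ∧ 5 ≤ y.val ∧ y.val ≤ 7) ∨ (y.val = 4 ∧ 5 ≤ x.val ∧ x.val ≤ 7)) := by
  intro x y
  have hx8 := x.isLt
  have hy8 := y.isLt
  rw [Tstar, SimpleGraph.fromEdgeSet_adj]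
  simp only [Set.mem_insert_iff, Set.mem_singleton_iff, Sym2.eq_iff, ne_eq, Fin.ext_iff]
  simp only [show ((0:Fin 8)).val = 0 from rfl, show ((1:Fin 8)).val = 1 from rfl,
    show ((2:Fin 8)).val = 2 from rfl, show ((3:Fin 8)).val = 3 from rfl,
    show ((4:Fin 8)).val = 4 from rfl, show ((5:Fin 8)).val = 5 from rfl,
    show ((6:Fin 8)).val = 6 from rfl, show ((7:Fin 8)).val = 7 from rfl]
  omega

open Finset in
set_option maxHeartbeats 2000000 in
/-- A connected graph with two adjacent degree-4 vertices, each having three leaf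
neighbours, is isomorphic to `T*`. -/
lemma Tstar_iso {V : Type*} [Fintype V] [DecidableEq V] (G : SimpleGraph V)
    [DecidableRel G.Adj] (hconn : G.Connected) (u w : V) (huw : G.Adj u w)
    (hu4 : G.degree u = 4) (hw4 : G.degree w = 4)
    (hLu : ((G.neighborFinset u).filter (fun x => G.degree x = 1)).card = 3)
    (hLw : ((G.neighborFinset w).filter (fun x => G.degree x = 1)).card = 3) :
    Nonempty (G ≃g Tstar) := by
  set Lu := (G.neighborFinset u).filter (fun x => G.degree x = 1) with hLudef
  set Lw := (G.neighborFinset w).filter (fun x => G.degree x = 1) with hLwdef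
  have hne : u ≠ w := huw.ne
  have hwLu : w ∉ Lu := by simp [hLudef, hw4]
  have huLw : u ∉ Lw := by simp [hLwdef, hu4]
  have huLu : u ∉ Lu := by simp [hLudef]
  have hwLw : w ∉ Lw := by simp [hLwdef]
  have hLuDeg : ∀ x ∈ Lu, G.degree x = 1 := by
    intro x hx; rw [hLudef, Finset.mem_filter] at hx; exact hx.2
  have hLwDeg : ∀ x ∈ Lw, G.degree x = 1 := by
    intro x hx; rw [hLwdef, Finset.mem_filter] at hx; exact hx.2
  have hLuAdj : ∀ x ∈ Lu, G.Adj u x := by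
    intro x hx; rw [hLudef, Finset.mem_filter, SimpleGraph.mem_neighborFinset] at hx; exact hx.1
  have hLwAdj : ∀ x ∈ Lw, G.Adj w x := by
    intro x hx; rw [hLwdef, Finset.mem_filter, SimpleGraph.mem_neighborFinset] at hx; exact hx.1
  have hLuN : ∀ x ∈ Lu, G.neighborFinset x = {u} := fun x hx =>
    leaf_neighbor G (hLuDeg x hx) (hLuAdj x hx).symm
  have hLwN : ∀ x ∈ Lw, G.neighborFinset x = {w} := fun x hx =>
    leaf_neighbor G (hLwDeg x hx) (hLwAdj x hx).symm
  have hdisj : Disjoint Lu Lw := by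
    rw [Finset.disjoint_left]
    intro x hxu hxw
    have h1 := hLuN x hxu
    have h2 := hLwN x hxw
    rw [h1] at h2
    exact hne (Finset.singleton_injective h2)
  have hNu : G.neighborFinset u = insert w Lu := by
    symm
    apply Finset.eq_of_subset_of_card_le
    · intro x hx
      rw [Finset.mem_insert] at hx
      rcases hx with rfl | hx
      · rwa [SimpleGraph.mem_neighborFinset]
      · rw [hLudef, Finset.mem_filter] at hx; exact hx.1
    · rw [Finset.card_insert_of_notMem hwLu, hLu]
      have : (G.neighborFinset u).card = 4 := hu4
      omega
  have hNw : G.neighborFinset w = insert u Lw := by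
    symm
    apply Finset.eq_of_subset_of_card_le
    · intro x hx
      rw [Finset.mem_insert] at hx
      rcases hx with rfl | hx
      · rw [SimpleGraph.mem_neighborFinset]; exact huw.symm
      · rw [hLwdef, Finset.mem_filter] at hx; exact hx.1
    · rw [Finset.card_insert_of_notMem huLw, hLw]
      have : (G.neighborFinset w).card = 4 := hw4
      omega
  set S : Finset V := insert u (insert w (Lu ∪ Lw)) with hSdef
  have hmemS : ∀ x, x ∈ S ↔ (x = u ∨ x = w ∨ x ∈ Lu ∨ x ∈ Lw) := by
    intro x; simp [hSdef, Finset.mem_insert, Finset.mem_union, or_assoc]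
  have hcl : ∀ a b, G.Adj a b → a ∈ S → b ∈ S := by
    intro a b hab ha
    rw [hmemS] at ha ⊢
    rcases ha with h | h | h | h
    · rw [h] at hab
      have hb : b ∈ insert w Lu := by rw [← hNu]; simpa using hab
      rw [Finset.mem_insert] at hb
      rcases hb with hb | hb
      · exact Or.inr (Or.inl hb)
      · exact Or.inr (Or.inr (Or.inl hb))
    · rw [h] at hab
      have hb : b ∈ insert u Lw := by rw [← hNw]; simpa using hab
      rw [Finset.mem_insert] at hb
      rcases hb with hb | hb
      · exact Or.inl hb
      · exact Or.inr (Or.inr (Or.inr hb))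
    · have hb : b ∈ G.neighborFinset a := by simpa using hab
      rw [hLuN a h, Finset.mem_singleton] at hb
      exact Or.inl hb
    · have hb : b ∈ G.neighborFinset a := by simpa using hab
      rw [hLwN a h, Finset.mem_singleton] at hb
      exact Or.inr (Or.inl hb)
  have hall : ∀ b, b ∈ S := by
    intro b
    obtain ⟨p⟩ := hconn u b
    exact closure G (fun x => x ∈ S) hcl p ((hmemS u).mpr (Or.inl rfl))
  have hcard : Fintype.card V = 8 := by
    have huniv : S = Finset.univ := Finset.eq_univ_iff_forall.mpr hall
    have hwS : w ∉ Lu ∪ Lw := by simp [hwLu, hwLw]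
    have huS : u ∉ insert w (Lu ∪ Lw) := by simp [hne, huLu, huLw]
    rw [← Finset.card_univ, ← huniv, hSdef, Finset.card_insert_of_notMem huS,
      Finset.card_insert_of_notMem hwS, Finset.card_union_of_disjoint hdisj, hLu, hLw]
  have hadjc : ∀ a b, G.Adj a b ↔ ((a = u ∧ b = w) ∨ (a = w ∧ b = u) ∨ (a = u ∧ b ∈ Lu) ∨
      (b = u ∧ a ∈ Lu) ∨ (a = w ∧ b ∈ Lw) ∨ (b = w ∧ a ∈ Lw)) := by
    intro a b
    constructor
    · intro hab
      have ha := hall a; rw [hmemS] at ha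
      rcases ha with h | h | h | h
      · rw [h] at hab
        have hb : b ∈ insert w Lu := by rw [← hNu]; simpa using hab
        rw [Finset.mem_insert] at hb
        rcases hb with hb | hb
        · exact Or.inl ⟨h, hb⟩
        · exact Or.inr (Or.inr (Or.inl ⟨h, hb⟩))
      · rw [h] at hab
        have hb : b ∈ insert u Lw := by rw [← hNw]; simpa using hab
        rw [Finset.mem_insert] at hb
        rcases hb with hb | hb
        · exact Or.inr (Or.inl ⟨h, hb⟩)
        · exact Or.inr (Or.inr (Or.inr (Or.inr (Or.inl ⟨h, hb⟩))))
      · have hb : b ∈ G.neighborFinset a := by simpa using hab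
        rw [hLuN a h, Finset.mem_singleton] at hb
        exact Or.inr (Or.inr (Or.inr (Or.inl ⟨hb, h⟩)))
      · have hb : b ∈ G.neighborFinset a := by simpa using hab
        rw [hLwN a h, Finset.mem_singleton] at hb
        exact Or.inr (Or.inr (Or.inr (Or.inr (Or.inr ⟨hb, h⟩))))
    · rintro (⟨h1, h2⟩ | ⟨h1, h2⟩ | ⟨h1, h2⟩ | ⟨h1, h2⟩ | ⟨h1, h2⟩ | ⟨h1, h2⟩)
      · rw [h1, h2]; exact huw
      · rw [h1, h2]; exact huw.symm
      · rw [h1]; exact hLuAdj b h2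
      · rw [h1]; exact (hLuAdj a h2).symm
      · rw [h1]; exact hLwAdj b h2
      · rw [h1]; exact (hLwAdj a h2).symm
  clear_value S Lu Lw
  clear hSdef hLudef hLwdef hcl hNu hNw hLuN hLwN hLuDeg hLwDeg hLuAdj hLwAdj hu4 hw4 huw
  let eu : {x // x ∈ Lu} ≃ Fin 3 := Finset.equivFinOfCardEq hLu
  let ew : {x // x ∈ Lw} ≃ Fin 3 := Finset.equivFinOfCardEq hLw
  obtain ⟨f, hfu, hfw, hfLu, hfLw⟩ :
      ∃ f : V → Fin 8, f u = 0 ∧ f w = 4 ∧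
        (∀ x (hx : x ∈ Lu), (f x).val = (eu ⟨x, hx⟩).val + 1) ∧
        (∀ x (hx : x ∈ Lw), (f x).val = (ew ⟨x, hx⟩).val + 5) := by
    refine ⟨fun x => if x = u then 0 else if x = w then 4
      else if hx : x ∈ Lu then ⟨(eu ⟨x, hx⟩).val + 1, by have := (eu ⟨x, hx⟩).isLt; omega⟩
      else if hx : x ∈ Lw then ⟨(ew ⟨x, hx⟩).val + 5, by have := (ew ⟨x, hx⟩).isLt; omega⟩
      else 0, ?_, ?_, ?_, ?_⟩
    · simp
    · simp [hne.symm]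
    · intro x hx
      have hxu : x ≠ u := fun h => huLu (h ▸ hx)
      have hxw : x ≠ w := fun h => hwLu (h ▸ hx)
      simp [hxu, hxw, hx]
    · intro x hx
      have hxu : x ≠ u := fun h => huLw (h ▸ hx)
      have hxw : x ≠ w := fun h => hwLw (h ▸ hx)
      have hxLu : x ∉ Lu := fun h => (Finset.disjoint_left.mp hdisj h) hx
      simp [hxu, hxw, hxLu, hx]
  have hvu : ∀ x, x = u → (f x).val = 0 := by intro x h; rw [h, hfu]; rfl
  have hvw : ∀ x, x = w → (f x).val = 4 := by intro x h; rw [h, hfw]; rfl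
  have hbLu : ∀ x, x ∈ Lu → 1 ≤ (f x).val ∧ (f x).val ≤ 3 := by
    intro x hx; rw [hfLu x hx]; have := (eu ⟨x, hx⟩).isLt; omega
  have hbLw : ∀ x, x ∈ Lw → 5 ≤ (f x).val ∧ (f x).val ≤ 7 := by
    intro x hx; rw [hfLw x hx]; have := (ew ⟨x, hx⟩).isLt; omega
  have hinj : Function.Injective f := by
    intro a b hab
    have hv : (f a).val = (f b).val := by rw [hab]
    have ha := hall a; rw [hmemS] at ha
    have hb := hall b; rw [hmemS] at hb
    rcases ha with h | h | h | h <;> rcases hb with h' | h' | h' | h'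
    · rw [h, h']
    · exfalso; have t1 := hvu a h; have t2 := hvw b h'; omega
    · exfalso; have t1 := hvu a h; have t2 := hbLu b h'; omega
    · exfalso; have t1 := hvu a h; have t2 := hbLw b h'; omega
    · exfalso; have t1 := hvw a h; have t2 := hvu b h'; omega
    · rw [h, h']
    · exfalso; have t1 := hvw a h; have t2 := hbLu b h'; omega
    · exfalso; have t1 := hvw a h; have t2 := hbLw b h'; omega
    · exfalso; have t1 := hbLu a h; have t2 := hvu b h'; omega
    · exfalso; have t1 := hbLu a h; have t2 := hvw b h'; omega
    · have t1 := hfLu a h; have t2 := hfLu b h'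
      have : eu ⟨a, h⟩ = eu ⟨b, h'⟩ := Fin.ext (by omega)
      have := eu.injective this
      exact Subtype.ext_iff.mp this
    · exfalso; have t1 := hbLu a h; have t2 := hbLw b h'; omega
    · exfalso; have t1 := hbLw a h; have t2 := hvu b h'; omega
    · exfalso; have t1 := hbLw a h; have t2 := hvw b h'; omega
    · exfalso; have t1 := hbLw a h; have t2 := hbLu b h'; omega
    · have t1 := hfLw a h; have t2 := hfLw b h'
      have : ew ⟨a, h⟩ = ew ⟨b, h'⟩ := Fin.ext (by omega)
      have := ew.injective this
      exact Subtype.ext_iff.mp this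
  have hbij : Function.Bijective f :=
    (Fintype.bijective_iff_injective_and_card f).mpr ⟨hinj, by rw [hcard]; simp⟩
  have hcu : ∀ x, (f x).val = 0 ↔ x = u := by
    intro x
    constructor
    · intro hh
      have hx := hall x; rw [hmemS] at hx
      rcases hx with h | h | h | h
      · exact h
      · exfalso; have := hvw x h; omega
      · exfalso; have := hbLu x h; omega
      · exfalso; have := hbLw x h; omega
    · exact hvu x
  have hcw : ∀ x, (f x).val = 4 ↔ x = w := by
    intro x
    constructor
    · intro hh
      have hx := hall x; rw [hmemS] at hx
      rcases hx with h | h | h | h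
      · exfalso; have := hvu x h; omega
      · exact h
      · exfalso; have := hbLu x h; omega
      · exfalso; have := hbLw x h; omega
    · exact hvw x
  have hc4 : ∀ x, (1 ≤ (f x).val ∧ (f x).val ≤ 4) ↔ (x = w ∨ x ∈ Lu) := by
    intro x
    have hx := hall x; rw [hmemS] at hx
    rcases hx with h | h | h | h
    · have := hvu x h
      refine iff_of_false (by omega) ?_
      rintro (h' | h')
      · exact hne (h.symm.trans h')
      · exact huLu (h ▸ h')
    · have := hvw x h
      exact iff_of_true (by omega) (Or.inl h)
    · have := hbLu x h
      exact iff_of_true (by omega) (Or.inr h)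
    · have := hbLw x h
      refine iff_of_false (by omega) ?_
      rintro (h' | h')
      · exact hwLw (h' ▸ h)
      · exact (Finset.disjoint_left.mp hdisj h') h
  have hc57 : ∀ x, (5 ≤ (f x).val ∧ (f x).val ≤ 7) ↔ x ∈ Lw := by
    intro x
    have hx := hall x; rw [hmemS] at hx
    rcases hx with h | h | h | h
    · have := hvu x h
      exact iff_of_false (by omega) (fun h' => huLw (h ▸ h'))
    · have := hvw x h
      exact iff_of_false (by omega) (fun h' => hwLw (h ▸ h'))
    · have := hbLu x h
      exact iff_of_false (by omega) (fun h' => (Finset.disjoint_left.mp hdisj h) h')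
    · have := hbLw x h
      exact iff_of_true (by omega) h
  refine ⟨⟨Equiv.ofBijective f hbij, ?_⟩⟩
  intro a b
  show Tstar.Adj (f a) (f b) ↔ G.Adj a b
  rw [Tstar_adj_iff, hadjc a b, hcu a, hcu b, hcw a, hcw b, hc4 a, hc4 b, hc57 a, hc57 b]
  tauto

end DasT

set_option maxHeartbeats 2000000 in
/-- Das–Trinajstić. If `G` is a non-trivial connected graph with
`Δ - δ ≤ 3` which is isomorphic neither to `K_{1,4}` nor to `T*`, then `GA(G) > ABC(G)`. -/
theorem stmt_0 {V : Type*} [Fintype V] (G : SimpleGraph V)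
    (hconn : G.Connected) (hnontriv : 2 ≤ Fintype.card V)
    (hdeg : maxDeg G - minDeg G ≤ 3)
    (hK14 : IsEmpty (G ≃g starK14)) (hTstar : IsEmpty (G ≃g Tstar)) :
    ABC G < GA G := by
  classical
  rw [← sub_pos]
  rw [DasT.maxDeg_eq G, DasT.minDeg_eq G] at hdeg
  have hNE : Nonempty V := Fintype.card_pos_iff.mp (by omega)
  obtain ⟨vstar⟩ := hNE
  have hwin3 : ∀ a b : V, G.degree a ≤ G.degree b + 3 := by
    intro a b
    have h1 := G.degree_le_maxDegree a
    have h2 := G.minDegree_le_degree b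
    omega
  have hd1 : ∀ v : V, 1 ≤ G.degree v := by
    intro v
    obtain ⟨x, hx⟩ := Fintype.exists_ne_of_one_lt_card (by omega) v
    obtain ⟨p⟩ := hconn v x
    cases p with
    | nil => exact absurd rfl hx
    | cons h _ => exact (G.degree_pos_iff_exists_adj v).mpr ⟨_, h⟩
  obtain ⟨y0, hy0⟩ : ∃ x, G.Adj vstar x := (G.degree_pos_iff_exists_adj vstar).mp (hd1 vstar)
  set Fl : Sym2 V → ℝ := Sym2.lift ⟨fun a b => DasT.F (G.degree a) (G.degree b),
    fun a b => DasT.F_symm _ _⟩ with hFl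
  have hdiff : GA G - ABC G = ∑ e ∈ G.edgeFinset, Fl e := by
    rw [DasT.GA_eq G, DasT.ABC_eq G, ← Finset.sum_sub_distrib]
    refine Finset.sum_congr rfl fun e _ => ?_
    induction e with
    | _ a b => simp only [hFl, Sym2.lift_mk]; rfl
  rw [hdiff]
  by_cases hbad : ∃ a b, G.Adj a b ∧ G.degree a = 4 ∧ G.degree b = 1
  case neg =>
    apply Finset.sum_pos
    · intro e he
      induction e with
      | _ a b =>
        rw [SimpleGraph.mem_edgeFinset, SimpleGraph.mem_edgeSet] at he
        simp only [hFl, Sym2.lift_mk]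
        refine DasT.F_pos (hd1 a) (hd1 b) (hwin3 b a) (hwin3 a b) ?_ ?_
        · rintro ⟨h1, h4⟩; exact hbad ⟨b, a, he.symm, h4, h1⟩
        · rintro ⟨h4, h1⟩; exact hbad ⟨a, b, he, h4, h1⟩
    · exact ⟨s(vstar, y0), by rwa [SimpleGraph.mem_edgeFinset, SimpleGraph.mem_edgeSet]⟩
  case pos =>
  obtain ⟨u0, v0, hadj0, hu0, hv0⟩ := hbad
  have hd4 : ∀ v : V, G.degree v ≤ 4 := by
    intro v
    have h1 := G.degree_le_maxDegree v
    have h2 := G.minDegree_le_degree v0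
    omega
  set n : V → ℕ := fun v => if G.degree v = 4
    then ((G.neighborFinset v).filter (fun x => G.degree x = 1)).card else 0 with hn
  have hn_card : ∀ v, G.degree v = 4 →
      n v = ((G.neighborFinset v).filter (fun x => G.degree x = 1)).card := by
    intro v h; simp only [hn, if_pos h]
  have hn_zero : ∀ v, G.degree v ≠ 4 → n v = 0 := by
    intro v h; simp only [hn, if_neg h]
  have hn_leaf : ∀ a b, G.Adj a b → G.degree a = 4 → G.degree b = 1 → 1 ≤ n a := by
    intro a b hab h4 h1
    rw [hn_card a h4]
    refine Finset.card_pos.mpr ⟨b, ?_⟩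
    rw [Finset.mem_filter, SimpleGraph.mem_neighborFinset]
    exact ⟨hab, h1⟩
  have hn3 : ∀ v, n v ≤ 3 := by
    intro v
    by_cases h4 : G.degree v = 4
    · rw [hn_card v h4]
      by_contra hcon
      push_neg at hcon
      have hsub : (G.neighborFinset v).filter (fun x => G.degree x = 1) ⊆ G.neighborFinset v :=
        Finset.filter_subset _ _
      have hsc := Finset.card_le_card hsub
      have hNcard : (G.neighborFinset v).card = 4 := h4
      have heq : (G.neighborFinset v).filter (fun x => G.degree x = 1) = G.neighborFinset v :=
        Finset.eq_of_subset_of_card_le hsub (by omega)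
      have hleaf : ∀ x ∈ G.neighborFinset v, G.degree x = 1 := by
        intro x hx
        rw [← heq, Finset.mem_filter] at hx
        exact hx.2
      obtain ⟨iso⟩ := DasT.K14_iso G hconn v h4 hleaf
      exact hK14.false iso
    · rw [hn_zero v h4]; omega
  have hn_pos_deg : ∀ v, 1 ≤ n v → G.degree v = 4 := by
    intro v h
    by_contra hc
    rw [hn_zero v hc] at h; omega
  have hTex : ∀ a b, G.Adj a b → n a = 3 → n b = 3 → False := by
    intro a b hab ha hb
    have ha4 := hn_pos_deg a (by omega)
    have hb4 := hn_pos_deg b (by omega)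
    obtain ⟨iso⟩ := DasT.Tstar_iso G hconn a b hab ha4 hb4
      (by rw [← hn_card a ha4]; exact ha) (by rw [← hn_card b hb4]; exact hb)
    exact hTstar.false iso
  set c : V → V → ℝ := fun x y => if n x + n y = 0 then 1/2
    else (n x : ℝ) / ((n x : ℝ) + (n y : ℝ)) with hc
  set W : V → V → ℝ := fun x y => c x y * DasT.F (G.degree x) (G.degree y) with hW
  have hc_nonneg : ∀ x y, 0 ≤ c x y := by
    intro x y; simp only [hc]
    split
    · norm_num
    · positivity
  have hc_one : ∀ x y, 1 ≤ n x → n y = 0 → c x y = 1 := by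
    intro x y hx hy
    simp only [hc]
    rw [if_neg (by omega), hy]
    rw [Nat.cast_zero, add_zero, div_self]
    exact Nat.cast_ne_zero.mpr (by omega)
  have hc_zero : ∀ x y, n x = 0 → 1 ≤ n y → c x y = 0 := by
    intro x y hx hy
    simp only [hc]
    rw [if_neg (by omega), hx]
    simp
  have hsum_c : ∀ x y, c x y + c y x = 1 := by
    intro x y
    simp only [hc]
    by_cases h : n x + n y = 0
    · rw [if_pos h, if_pos (by omega)]; norm_num
    · rw [if_neg h, if_neg (by omega)]
      have hpos : (0:ℝ) < (n x : ℝ) + (n y : ℝ) := by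
        have h' : 0 < n x + n y := Nat.pos_of_ne_zero h
        exact_mod_cast h'
      rw [add_comm ((n y : ℝ)) ((n x : ℝ)), ← add_div, div_self hpos.ne']
  have hWf : ∀ a b, G.Adj a b → W a b + W b a = Fl s(a, b) := by
    intro a b _
    simp only [hFl, Sym2.lift_mk, hW]
    rw [DasT.F_symm (G.degree b) (G.degree a)]
    have h := hsum_c a b
    have : c a b * DasT.F (G.degree a) (G.degree b) + c b a * DasT.F (G.degree a) (G.degree b)
        = (c a b + c b a) * DasT.F (G.degree a) (G.degree b) := by ring
    rw [this, h, one_mul]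
  rw [DasT.edge_sum_eq G W Fl hWf]
  have hposA : ∀ u, G.degree u = 4 → 1 ≤ n u → 0 < ∑ v ∈ G.neighborFinset u, W u v := by
    intro u h4 hk
    set L := (G.neighborFinset u).filter (fun v => G.degree v = 1) with hL
    set R := (G.neighborFinset u).filter (fun v => ¬ G.degree v = 1) with hR
    have hcards : L.card + R.card = 4 := by
      rw [hL, hR, Finset.card_filter_add_card_filter_not]; exact h4
    have hLcard : L.card = n u := (hn_card u h4).symm
    have hsplit : ∑ v ∈ G.neighborFinset u, W u v = ∑ v ∈ L, W u v + ∑ v ∈ R, W u v :=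
      (Finset.sum_filter_add_sum_filter_not _ _ _).symm
    have hLbound : ∀ v ∈ L, (-0.0661:ℝ) ≤ W u v := by
      intro v hv
      rw [hL, Finset.mem_filter] at hv
      have h1 : G.degree v = 1 := hv.2
      have hnv : n v = 0 := hn_zero v (by omega)
      simp only [hW]
      rw [hc_one u v hk hnv, one_mul, h4, h1]
      exact DasT.F41_ge
    have hLsum : (n u : ℝ) * (-0.0661) ≤ ∑ v ∈ L, W u v := by
      have h' := Finset.card_nsmul_le_sum L (W u) (-0.0661) hLbound
      rwa [hLcard, nsmul_eq_mul] at h'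
    have hRbound : ∀ (q : ℕ) (B : ℝ), (∀ v ∈ R, n v ≤ q) → B ≤ 0.2356 →
        B ≤ (n u : ℝ) / ((n u : ℝ) + (q : ℝ)) * 0.3875 → ∀ v ∈ R, B ≤ W u v := by
      intro q B hq hB1 hB2 v hv
      have hvmem := hv
      rw [hR, Finset.mem_filter, SimpleGraph.mem_neighborFinset] at hvmem
      obtain ⟨hadj, hne1⟩ := hvmem
      have hdv : 2 ≤ G.degree v := by have := hd1 v; omega
      by_cases hnv : n v = 0
      · simp only [hW]
        rw [hc_one u v hk hnv, one_mul, h4]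
        exact le_trans hB1 (DasT.F4d_ge hdv (hd4 v))
      · have hv4 : G.degree v = 4 := hn_pos_deg v (by omega)
        have hcb : (n u : ℝ) / ((n u : ℝ) + (q : ℝ)) ≤ c u v := by
          simp only [hc]
          rw [if_neg (by omega)]
          have hnu1 : (1:ℝ) ≤ (n u : ℝ) := by exact_mod_cast hk
          have h1 : (0:ℝ) < (n u : ℝ) + (n v : ℝ) := by
            have : (0:ℝ) ≤ (n v : ℝ) := Nat.cast_nonneg _
            linarith
          have h2 : (n u : ℝ) + (n v : ℝ) ≤ (n u : ℝ) + (q : ℝ) := by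
            have : (n v : ℝ) ≤ (q : ℝ) := by exact_mod_cast hq v hv
            linarith
          exact div_le_div_of_nonneg_left (by linarith) h1 h2
        have hF : (0.3875:ℝ) ≤ DasT.F (G.degree u) (G.degree v) := by
          rw [h4, hv4]; exact DasT.F44_ge
        simp only [hW]
        calc B ≤ (n u : ℝ) / ((n u : ℝ) + (q : ℝ)) * 0.3875 := hB2
          _ ≤ c u v * DasT.F (G.degree u) (G.degree v) :=
              mul_le_mul hcb hF (by norm_num) (hc_nonneg u v)
    have hk3 := hn3 u
    have hkcases : n u = 1 ∨ n u = 2 ∨ n u = 3 := by omega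
    rcases hkcases with hku | hku | hku
    · have hRs : ∀ v ∈ R, (0.0968:ℝ) ≤ W u v :=
        hRbound 3 0.0968 (fun v _ => hn3 v) (by norm_num) (by rw [hku]; norm_num)
      have hRsum : (R.card : ℝ) * 0.0968 ≤ ∑ v ∈ R, W u v := by
        have h' := Finset.card_nsmul_le_sum R (W u) 0.0968 hRs
        rwa [nsmul_eq_mul] at h'
      have hRc : R.card = 3 := by omega
      rw [hsplit]
      rw [hku] at hLsum
      rw [hRc] at hRsum
      push_cast at hLsum hRsum
      linarith
    · have hRs : ∀ v ∈ R, (0.155:ℝ) ≤ W u v :=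
        hRbound 3 0.155 (fun v _ => hn3 v) (by norm_num) (by rw [hku]; norm_num)
      have hRsum : (R.card : ℝ) * 0.155 ≤ ∑ v ∈ R, W u v := by
        have h' := Finset.card_nsmul_le_sum R (W u) 0.155 hRs
        rwa [nsmul_eq_mul] at h'
      have hRc : R.card = 2 := by omega
      rw [hsplit]
      rw [hku] at hLsum
      rw [hRc] at hRsum
      push_cast at hLsum hRsum
      linarith
    · have hq2 : ∀ v ∈ R, n v ≤ 2 := by
        intro v hv
        by_contra hcon
        have hnv3 : n v = 3 := by have := hn3 v; omega
        rw [hR, Finset.mem_filter, SimpleGraph.mem_neighborFinset] at hv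
        exact hTex u v hv.1 hku hnv3
      have hRs : ∀ v ∈ R, (0.2325:ℝ) ≤ W u v :=
        hRbound 2 0.2325 hq2 (by norm_num) (by rw [hku]; norm_num)
      have hRsum : (R.card : ℝ) * 0.2325 ≤ ∑ v ∈ R, W u v := by
        have h' := Finset.card_nsmul_le_sum R (W u) 0.2325 hRs
        rwa [nsmul_eq_mul] at h'
      have hRc : R.card = 1 := by omega
      rw [hsplit]
      rw [hku] at hLsum
      rw [hRc] at hRsum
      push_cast at hLsum hRsum
      linarith
  have hnonneg : ∀ u, 0 ≤ ∑ v ∈ G.neighborFinset u, W u v := by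
    intro u
    by_cases hA : G.degree u = 4 ∧ 1 ≤ n u
    · exact (hposA u hA.1 hA.2).le
    · apply Finset.sum_nonneg
      intro v hv
      rw [SimpleGraph.mem_neighborFinset] at hv
      by_cases hB : G.degree u = 1 ∧ G.degree v = 4
      · have hnu : n u = 0 := hn_zero u (by omega)
        have hnv : 1 ≤ n v := hn_leaf v u hv.symm hB.2 hB.1
        simp only [hW]
        rw [hc_zero u v hnu hnv, zero_mul]
      · have hF : 0 < DasT.F (G.degree u) (G.degree v) := by
          refine DasT.F_pos (hd1 u) (hd1 v) (hwin3 v u) (hwin3 u v) ?_ ?_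
          · rintro ⟨h1, h4⟩; exact hB ⟨h1, h4⟩
          · rintro ⟨h4, h1⟩; exact hA ⟨h4, hn_leaf u v hv h4 h1⟩
        simp only [hW]
        exact mul_nonneg (hc_nonneg u v) hF.le
  exact Finset.sum_pos' (fun u _ => hnonneg u)
    ⟨u0, Finset.mem_univ u0, hposA u0 hu0 (hn_leaf u0 v0 hadj0 hu0 hv0)⟩
end

section
/- Let M be a connected simple graph with at least 3 vertices whose maximum degree is at most 4 (a molecular graph), and let G be the line graph of M. Then GA(G) > ABC(G). -/
open SimpleGraph

/-! ### Instance irrelevance helpers -/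

lemma degree_irrel' {W : Type*} (G : SimpleGraph W) (v : W) (i1 i2 : Fintype (G.neighborSet v)) :
    @SimpleGraph.degree W G v i1 = @SimpleGraph.degree W G v i2 := by
  have : i1 = i2 := Subsingleton.elim _ _
  rw [this]

lemma deg_spec {W : Type*} [Finite W] (G : SimpleGraph W) (v : W)
    (i : Fintype (G.neighborSet v)) : @SimpleGraph.degree W G v i = deg G v := by
  unfold deg
  exact degree_irrel' G v i _

noncomputable def gaF {W : Type*} (d : W → ℕ) : Sym2 W → ℝ :=
  Sym2.lift ⟨fun u v => 2 * Real.sqrt ((d u : ℝ) * (d v : ℝ)) / ((d u : ℝ) + (d v : ℝ)),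
    fun u v => by dsimp only; rw [mul_comm ((d u : ℝ)), add_comm ((d u : ℝ))]⟩

noncomputable def abcF {W : Type*} (d : W → ℕ) : Sym2 W → ℝ :=
  Sym2.lift ⟨fun u v => Real.sqrt (((d u : ℝ) + (d v : ℝ) - 2) / ((d u : ℝ) * (d v : ℝ))),
    fun u v => by dsimp only; rw [mul_comm ((d u : ℝ)), add_comm ((d u : ℝ))]⟩

lemma GA_spec {W : Type*} [Finite W] (G : SimpleGraph W) (iE : Fintype G.edgeSet) :
    GA G = ∑ e ∈ G.edgeFinset, gaF (deg G) e := by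
  unfold GA; dsimp only
  refine Finset.sum_congr ?_ fun e _ => ?_
  · congr 1
    exact Subsingleton.elim _ _
  · unfold gaF
    congr 1

lemma ABC_spec {W : Type*} [Finite W] (G : SimpleGraph W) (iE : Fintype G.edgeSet) :
    ABC G = ∑ e ∈ G.edgeFinset, abcF (deg G) e := by
  unfold ABC; dsimp only
  refine Finset.sum_congr ?_ fun e _ => ?_
  · congr 1
    exact Subsingleton.elim _ _
  · unfold abcF
    congr 1

lemma deg_pos {W : Type*} [Finite W] {G : SimpleGraph W} {u v : W} (h : G.Adj u v) :
    1 ≤ deg G u := by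
  classical
  have i : Fintype W := Fintype.ofFinite W
  rw [← deg_spec G u inferInstance]
  exact (G.degree_pos_iff_exists_adj u).mpr ⟨v, h⟩

/-! ### Real analysis lemmas -/

noncomputable def gaR (a b : ℝ) : ℝ := 2 * Real.sqrt (a * b) / (a + b)
noncomputable def abcR (a b : ℝ) : ℝ := Real.sqrt ((a + b - 2) / (a * b))

lemma gaF_eval {W : Type*} (d : W → ℕ) (u v : W) :
    gaF d s(u,v) = gaR (d u) (d v) := by
  simp [gaF, gaR]

lemma abcF_eval {W : Type*} (d : W → ℕ) (u v : W) :
    abcF d s(u,v) = abcR (d u) (d v) := by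
  simp [abcF, abcR]

lemma sqrtUB {x q : ℝ} (hq : 0 ≤ q) (h : x ≤ q^2) : Real.sqrt x ≤ q := by
  calc Real.sqrt x ≤ Real.sqrt (q^2) := Real.sqrt_le_sqrt h
  _ = q := Real.sqrt_sq hq

lemma sqrtLB {x q : ℝ} (hq : 0 ≤ q) (h : q^2 ≤ x) : q ≤ Real.sqrt x := by
  calc q = Real.sqrt (q^2) := (Real.sqrt_sq hq).symm
  _ ≤ Real.sqrt x := Real.sqrt_le_sqrt h

lemma gaR_eq_sqrt {a b : ℝ} (ha : 0 < a) (hb : 0 < b) :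
    gaR a b = Real.sqrt (4 * (a * b) / (a + b) ^ 2) := by
  have hab : 0 < a + b := by linarith
  have h1 : (4*(a*b)/(a+b)^2) = (2*Real.sqrt (a*b)/(a+b))^2 := by
    rw [div_pow, mul_pow, sq (Real.sqrt _), Real.mul_self_sqrt (by positivity)]
    ring
  rw [gaR, h1, Real.sqrt_sq (by positivity)]

lemma L_pos {a b : ℕ} (ha : 1 ≤ a) (hb : 1 ≤ b)
    (h : (a + b - 2) * (a + b) ^ 2 < 4 * a ^ 2 * b ^ 2) :
    abcR a b < gaR a b := by
  have haR : (0:ℝ) < a := by exact_mod_cast ha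
  have hbR : (0:ℝ) < b := by exact_mod_cast hb
  have habR : (0:ℝ) < a + b := by linarith
  have h2 : ((a:ℝ) + b - 2) ≥ 0 := by
    have : (2:ℝ) ≤ (a:ℝ) + b := by exact_mod_cast Nat.add_le_add ha hb
    linarith
  rw [gaR_eq_sqrt haR hbR, abcR]
  apply Real.sqrt_lt_sqrt (by positivity)
  rw [div_lt_div_iff₀ (by positivity) (by positivity)]
  have hcast : ((a:ℝ) + b - 2) = ((a + b - 2 : ℕ) : ℝ) := by
    push_cast [Nat.cast_sub (by omega : 2 ≤ a + b)]; ring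
  rw [hcast]
  calc ((a + b - 2 : ℕ):ℝ) * (a+b)^2 = (((a + b - 2) * (a+b)^2 : ℕ) : ℝ) := by push_cast; ring
  _ < ((4 * a^2 * b^2 : ℕ) : ℝ) := by exact_mod_cast h
  _ = 4 * (a*b) * (a*b) := by push_cast; ring

lemma L_neg_bound : -(7/100) ≤ gaR 1 4 - abcR 1 4 := by
  rw [gaR, abcR, show ((1:ℝ)+4-2)/(1*4) = 3/4 by norm_num,
    show (1:ℝ)*4 = 4 by norm_num, show (1:ℝ)+4 = 5 by norm_num]
  linarith [sqrtUB (show (0:ℝ) ≤ 0.87 by norm_num) (show (3:ℝ)/4 ≤ (0.87:ℝ)^2 by norm_num),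
    sqrtLB (show (0:ℝ) ≤ 2 by norm_num) (show (2:ℝ)^2 ≤ 4 by norm_num)]

lemma L_neg_strict : gaR 1 4 - abcR 1 4 < 0 := by
  rw [gaR, abcR, show ((1:ℝ)+4-2)/(1*4) = 3/4 by norm_num,
    show (1:ℝ)*4 = 4 by norm_num, show (1:ℝ)+4 = 5 by norm_num]
  linarith [sqrtLB (show (0:ℝ) ≤ 0.86 by norm_num) (show (0.86:ℝ)^2 ≤ (3:ℝ)/4 by norm_num),
    sqrtUB (show (0:ℝ) ≤ 2 by norm_num) (show (4:ℝ) ≤ (2:ℝ)^2 by norm_num)]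

lemma L_partner (b : ℕ) (h3 : 3 ≤ b) (h6 : b ≤ 6) : 3/10 ≤ gaR 4 b - abcR 4 b := by
  interval_cases b <;> rw [gaR, abcR] <;> push_cast
  · rw [show ((4:ℝ)+3-2)/(4*3) = 5/12 by norm_num, show (4:ℝ)*3 = 12 by norm_num,
      show (4:ℝ)+3 = 7 by norm_num]
    linarith [sqrtLB (show (0:ℝ) ≤ 3.46 by norm_num) (show (3.46:ℝ)^2 ≤ 12 by norm_num),
      sqrtUB (show (0:ℝ) ≤ 0.65 by norm_num) (show (5:ℝ)/12 ≤ (0.65:ℝ)^2 by norm_num)]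
  · rw [show ((4:ℝ)+4-2)/(4*4) = 3/8 by norm_num, show (4:ℝ)*4 = 16 by norm_num,
      show (4:ℝ)+4 = 8 by norm_num]
    linarith [sqrtLB (show (0:ℝ) ≤ 4 by norm_num) (show (4:ℝ)^2 ≤ 16 by norm_num),
      sqrtUB (show (0:ℝ) ≤ 0.62 by norm_num) (show (3:ℝ)/8 ≤ (0.62:ℝ)^2 by norm_num)]
  · rw [show ((4:ℝ)+5-2)/(4*5) = 7/20 by norm_num, show (4:ℝ)*5 = 20 by norm_num,
      show (4:ℝ)+5 = 9 by norm_num]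
    linarith [sqrtLB (show (0:ℝ) ≤ 4.47 by norm_num) (show (4.47:ℝ)^2 ≤ 20 by norm_num),
      sqrtUB (show (0:ℝ) ≤ 0.6 by norm_num) (show (7:ℝ)/20 ≤ (0.6:ℝ)^2 by norm_num)]
  · rw [show ((4:ℝ)+6-2)/(4*6) = 1/3 by norm_num, show (4:ℝ)*6 = 24 by norm_num,
      show (4:ℝ)+6 = 10 by norm_num]
    linarith [sqrtLB (show (0:ℝ) ≤ 4.89 by norm_num) (show (4.89:ℝ)^2 ≤ 24 by norm_num),
      sqrtUB (show (0:ℝ) ≤ 0.58 by norm_num) (show (1:ℝ)/3 ≤ (0.58:ℝ)^2 by norm_num)]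

lemma natCase (a b : ℕ) (h1a : 1 ≤ a) (h1b : 1 ≤ b) (h6a : a ≤ 6) (h6b : b ≤ 6)
    (ha1 : a = 1 → b ≤ 4) (hb1 : b = 1 → a ≤ 4)
    (hno : ¬(a = 1 ∧ b = 4)) (hno' : ¬(a = 4 ∧ b = 1)) :
    (a + b - 2) * (a + b)^2 < 4 * a^2 * b^2 := by
  interval_cases a <;> interval_cases b <;> simp_all <;> norm_num

lemma count_swap {W : Type*} [DecidableEq W] (A : Finset (Sym2 W)) (T : Finset W) :
    ∑ p ∈ A, (T.filter (fun f => f ∈ p)).card = ∑ f ∈ T, (A.filter (fun p => f ∈ p)).card := by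
  simp_rw [Finset.card_filter]
  exact Finset.sum_comm



lemma key {W : Type*} [Finite W] (G : SimpleGraph W)
    (hne : ∃ v w : W, G.Adj v w)
    (h6 : ∀ v : W, deg G v ≤ 6)
    (h1 : ∀ v w : W, G.Adj v w → deg G v = 1 → deg G w ≤ 4)
    (h2 : ∀ v w x : W, G.Adj v w → deg G v = 1 → deg G w = 4 → G.Adj w x → x ≠ v →
      3 ≤ deg G x) :
    ABC G < GA G := by
  classical
  have iW : Fintype W := Fintype.ofFinite W
  have iE : Fintype G.edgeSet := inferInstance
  rw [GA_spec G iE, ABC_spec G iE, ← sub_pos, ← Finset.sum_sub_distrib]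
  set d : W → ℕ := deg G with hd
  set c : Sym2 W → ℝ := fun p => gaF d p - abcF d p with hc
  show 0 < ∑ p ∈ G.edgeFinset, c p
  set S : Finset (Sym2 W) := G.edgeFinset with hS
  have hpos : ∀ {u v : W}, G.Adj u v → 1 ≤ d u := fun h => deg_pos h
  have hceval : ∀ u v : W, c s(u,v) = gaR (d u) (d v) - abcR (d u) (d v) := by
    intro u v; simp only [hc, gaF_eval, abcF_eval]
  have hcsymm : ∀ u v : W, c s(u,v) = c s(v,u) := by
    intro u v; rw [Sym2.eq_swap]
  have claim_pos : ∀ u v : W, G.Adj u v → ¬(d u = 1 ∧ d v = 4) → ¬(d u = 4 ∧ d v = 1) →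
      0 < c s(u,v) := by
    intro u v hadj hnA hnB
    rw [hceval, sub_pos]
    exact L_pos (hpos hadj) (hpos hadj.symm)
      (natCase (d u) (d v) (hpos hadj) (hpos hadj.symm) (h6 u) (h6 v)
        (fun h => h1 u v hadj h) (fun h => h1 v u hadj.symm h) hnA hnB)
  have claim_neg_bound : ∀ u v : W, d u = 1 → d v = 4 → -(7/100) ≤ c s(u,v) := by
    intro u v hu hv
    rw [hceval, hu, hv]
    exact_mod_cast L_neg_bound
  have claim_neg_strict : ∀ u v : W, d u = 1 → d v = 4 → c s(u,v) < 0 := by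
    intro u v hu hv
    rw [hceval, hu, hv]
    exact_mod_cast L_neg_strict
  have claim_partner : ∀ u v : W, d u = 4 → 3 ≤ d v → (3:ℝ)/10 ≤ c s(u,v) := by
    intro u v hu h3
    rw [hceval, hu]
    exact_mod_cast L_partner (d v) h3 (h6 v)
  set Neg : Finset (Sym2 W) := S.filter (fun p => c p ≤ 0) with hNeg
  set T : Finset W := Finset.univ.filter
    (fun f : W => d f = 4 ∧ ∃ e : W, G.Adj f e ∧ d e = 1) with hT
  set P : Finset (Sym2 W) := S.filter (fun p => 0 < c p ∧ ∃ f, f ∈ T ∧ f ∈ p) with hP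
  have hmemS : ∀ {u v : W}, G.Adj u v → s(u,v) ∈ S := by
    intro u v h; rw [hS, SimpleGraph.mem_edgeFinset]; exact G.mem_edgeSet.mpr h
  have hadjS : ∀ {u v : W}, s(u,v) ∈ S → G.Adj u v := by
    intro u v h; rw [hS, SimpleGraph.mem_edgeFinset] at h; exact G.mem_edgeSet.mp h
  -- structure of negative edges
  have S1 : ∀ p ∈ Neg, ∃ e f : W, p = s(e,f) ∧ G.Adj e f ∧ d e = 1 ∧ d f = 4 := by
    intro p hp
    induction p using Sym2.ind with
    | _ u v =>
      rw [hNeg, Finset.mem_filter] at hp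
      obtain ⟨hpS, hcle⟩ := hp
      have hadj : G.Adj u v := hadjS hpS
      by_cases hA : d u = 1 ∧ d v = 4
      · exact ⟨u, v, rfl, hadj, hA.1, hA.2⟩
      by_cases hB : d u = 4 ∧ d v = 1
      · exact ⟨v, u, Sym2.eq_swap, hadj.symm, hB.2, hB.1⟩
      exact absurd (claim_pos u v hadj hA hB) (not_lt.mpr hcle)
  have S1' : ∀ p ∈ Neg, ∃ f, f ∈ T ∧ f ∈ p := by
    intro p hp
    obtain ⟨e, f, rfl, hadj, hde, hdf⟩ := S1 p hp
    refine ⟨f, ?_, Sym2.mem_mk_right e f⟩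
    rw [hT, Finset.mem_filter]
    exact ⟨Finset.mem_univ f, hdf, e, hadj.symm, hde⟩
  have uniq : ∀ f e e' : W, d f = 4 → G.Adj f e → d e = 1 → G.Adj f e' → d e' = 1 →
      e = e' := by
    intro f e e' hf hfe hde hfe' hde'
    by_contra hne'
    have := h2 e f e' hfe.symm hde hf hfe' (fun h => hne' h.symm)
    omega
  have cardNegT : Neg.card ≤ T.card := by
    calc Neg.card = ∑ _p ∈ Neg, 1 := by rw [Finset.sum_const, smul_eq_mul, mul_one]
    _ ≤ ∑ p ∈ Neg, (T.filter (fun f => f ∈ p)).card := by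
        refine Finset.sum_le_sum ?_
        intro p hp
        obtain ⟨f, hfT, hfp⟩ := S1' p hp
        exact Finset.card_pos.mpr ⟨f, Finset.mem_filter.mpr ⟨hfT, hfp⟩⟩
    _ = ∑ f ∈ T, (Neg.filter (fun p => f ∈ p)).card := count_swap Neg T
    _ ≤ ∑ _f ∈ T, 1 := by
        refine Finset.sum_le_sum ?_
        intro f hfT
        rw [Finset.card_le_one]
        intro p hp q hq
        rw [Finset.mem_filter] at hp hq
        obtain ⟨hpNeg, hfp⟩ := hp
        obtain ⟨hqNeg, hfq⟩ := hq
        obtain ⟨e1, f1, rfl, hadj1, hde1, hdf1⟩ := S1 p hpNeg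
        obtain ⟨e2, f2, rfl, hadj2, hde2, hdf2⟩ := S1 q hqNeg
        rw [hT, Finset.mem_filter] at hfT
        obtain ⟨-, hdf4, -⟩ := hfT
        have hf1 : f = f1 := by
          rcases Sym2.mem_iff.mp hfp with h | h
          · exfalso; rw [h] at hdf4; omega
          · exact h
        have hf2 : f = f2 := by
          rcases Sym2.mem_iff.mp hfq with h | h
          · exfalso; rw [h] at hdf4; omega
          · exact h
        subst hf1
        subst hf2
        have : e1 = e2 := uniq f e1 e2 hdf4 hadj1.symm hde1 hadj2.symm hde2
        rw [this]
    _ = T.card := by rw [Finset.sum_const, smul_eq_mul, mul_one]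
  have cardTP : 3 * T.card ≤ 2 * P.card := by
    calc 3 * T.card = ∑ _f ∈ T, 3 := by rw [Finset.sum_const, smul_eq_mul, mul_comm]
    _ ≤ ∑ f ∈ T, (P.filter (fun p => f ∈ p)).card := by
        refine Finset.sum_le_sum ?_
        intro f hfT
        have hfT' := hfT
        rw [hT, Finset.mem_filter] at hfT'
        obtain ⟨-, hdf4, e, hfe, hde⟩ := hfT'
        have hnb : ((G.neighborFinset f).erase e).card = 3 := by
          rw [Finset.card_erase_of_mem (by rw [SimpleGraph.mem_neighborFinset]; exact hfe),
            SimpleGraph.card_neighborFinset_eq_degree, deg_spec, ← hd]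
          omega
        refine le_trans (le_of_eq hnb.symm)
          (Finset.card_le_card_of_injOn (fun g => s(f,g)) ?_ ?_)
        · intro g hg
          rw [Finset.mem_coe, Finset.mem_erase, SimpleGraph.mem_neighborFinset] at hg
          obtain ⟨hge, hfg⟩ := hg
          have h3g : 3 ≤ d g := h2 e f g hfe.symm hde hdf4 hfg hge
          have hcp : (3:ℝ)/10 ≤ c s(f,g) := claim_partner f g hdf4 h3g
          simp only
          rw [Finset.mem_coe, Finset.mem_filter]
          refine ⟨?_, Sym2.mem_mk_left f g⟩
          rw [hP, Finset.mem_filter]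
          exact ⟨hmemS hfg, lt_of_lt_of_le (by norm_num : (0:ℝ) < 3/10) hcp,
            f, hfT, Sym2.mem_mk_left f g⟩
        · intro g1 _ g2 _ heq
          exact Sym2.congr_right.mp heq
    _ = ∑ p ∈ P, (T.filter (fun f => f ∈ p)).card := (count_swap P T).symm
    _ ≤ ∑ _p ∈ P, 2 := by
        refine Finset.sum_le_sum ?_
        intro p hp
        have hp' := hp
        rw [hP, Finset.mem_filter] at hp'
        induction p using Sym2.ind with
        | _ u v =>
          refine le_trans (Finset.card_le_card (t := {u, v}) ?_) ?_
          · intro f hf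
            rw [Finset.mem_filter] at hf
            rcases Sym2.mem_iff.mp hf.2 with rfl | rfl
            · exact Finset.mem_insert_self _ _
            · exact Finset.mem_insert_of_mem (Finset.mem_singleton_self _)
          · exact (Finset.card_insert_le _ _).trans (by simp)
    _ = 2 * P.card := by rw [Finset.sum_const, smul_eq_mul, mul_comm]
  have CPval : ∀ p ∈ P, (3:ℝ)/10 ≤ c p := by
    intro p hp
    rw [hP, Finset.mem_filter] at hp
    obtain ⟨hpS, hcpos, f, hfT, hfp⟩ := hp
    obtain ⟨g, rfl⟩ := Sym2.mem_iff_exists.mp hfp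
    have hadj : G.Adj f g := hadjS hpS
    rw [hT, Finset.mem_filter] at hfT
    obtain ⟨-, hdf4, e, hfe, hde⟩ := hfT
    by_cases hge : g = e
    · subst hge
      have : c s(f,g) < 0 := by rw [hcsymm f g]; exact claim_neg_strict g f hde hdf4
      linarith
    · have h3g : 3 ≤ d g := h2 e f g hfe.symm hde hdf4 hadj hge
      exact claim_partner f g hdf4 h3g
  have CNval : ∀ p ∈ Neg, -(7/100:ℝ) ≤ c p := by
    intro p hp
    obtain ⟨e, f, rfl, hadj, hde, hdf⟩ := S1 p hp
    exact claim_neg_bound e f hde hdf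
  have hsplit := Finset.sum_filter_add_sum_filter_not S (fun p => c p ≤ 0) c
  set Pos : Finset (Sym2 W) := S.filter (fun p => ¬ c p ≤ 0) with hPos
  have hPsub : P ⊆ Pos := by
    intro p hp
    rw [hP, Finset.mem_filter] at hp
    rw [hPos, Finset.mem_filter]
    exact ⟨hp.1, not_le.mpr hp.2.1⟩
  have hsum_pos_ge : ∑ p ∈ P, c p ≤ ∑ p ∈ Pos, c p := by
    refine Finset.sum_le_sum_of_subset_of_nonneg hPsub ?_
    intro p hp _
    have hp' := hp
    rw [hPos, Finset.mem_filter] at hp'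
    exact le_of_lt (not_le.mp hp'.2)
  have hsumP : (3/10:ℝ) * P.card ≤ ∑ p ∈ P, c p := by
    have h := Finset.card_nsmul_le_sum P c (3/10) CPval
    rw [nsmul_eq_mul] at h
    linarith
  have hsumNeg : -(7/100:ℝ) * Neg.card ≤ ∑ p ∈ Neg, c p := by
    have h := Finset.card_nsmul_le_sum Neg c (-(7/100)) CNval
    rw [nsmul_eq_mul] at h
    linarith
  by_cases hTe : T.card = 0
  · have hNegE : Neg = ∅ := Finset.card_eq_zero.mp (Nat.le_zero.mp (hTe ▸ cardNegT))
    obtain ⟨v, w, hvw⟩ := hne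
    refine Finset.sum_pos ?_ ⟨s(v,w), hmemS hvw⟩
    intro p hp
    by_contra hle
    have hmem : p ∈ Neg := by rw [hNeg, Finset.mem_filter]; exact ⟨hp, not_lt.mp hle⟩
    rw [hNegE] at hmem
    exact absurd hmem (Finset.notMem_empty p)
  · have ht1 : (1:ℝ) ≤ T.card := by
      have : 1 ≤ T.card := Nat.one_le_iff_ne_zero.mpr hTe
      exact_mod_cast this
    have hc1 : (Neg.card : ℝ) ≤ T.card := by exact_mod_cast cardNegT
    have hc2 : 3 * (T.card:ℝ) ≤ 2 * P.card := by exact_mod_cast cardTP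
    rw [← hsplit]
    linarith

lemma lg_degree {V : Type*} [Fintype V] [DecidableEq V] (M : SimpleGraph V) [DecidableRel M.Adj]
    {u v : V} (he : s(u,v) ∈ M.edgeSet)
    (iN : Fintype ((M.lineGraph).neighborSet ⟨s(u,v), he⟩)) :
    @SimpleGraph.degree _ (M.lineGraph) ⟨s(u,v), he⟩ iN = M.degree u + M.degree v - 2 := by
  classical
  have hadj : M.Adj u v := M.mem_edgeSet.mp he
  have himg : ((M.lineGraph).neighborFinset ⟨s(u,v), he⟩).image (Subtype.val)
      = ((M.incidenceFinset u ∪ M.incidenceFinset v).erase s(u,v)) := by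
    ext f
    simp only [Finset.mem_image, SimpleGraph.mem_neighborFinset, Finset.mem_erase,
      Finset.mem_union, SimpleGraph.mem_incidenceFinset, SimpleGraph.lineGraph_adj_iff_exists]
    constructor
    · rintro ⟨⟨g, hg⟩, ⟨hne, x, hx1, hx2⟩, rfl⟩
      have hxe : x ∈ s(u,v) := hx1
      refine ⟨fun hgg => hne (Subtype.ext hgg.symm), ?_⟩
      rcases Sym2.mem_iff.mp hxe with rfl | rfl
      · exact Or.inl ⟨hg, hx2⟩
      · exact Or.inr ⟨hg, hx2⟩
    · rintro ⟨hne, hf⟩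
      have hfe : f ∈ M.edgeSet := by rcases hf with ⟨h1,_⟩|⟨h1,_⟩ <;> exact h1
      refine ⟨⟨f, hfe⟩, ⟨fun hq => hne (congrArg Subtype.val hq).symm, ?_⟩, rfl⟩
      rcases hf with ⟨_, hx⟩|⟨_, hx⟩
      · exact ⟨u, Sym2.mem_mk_left u v, hx⟩
      · exact ⟨v, Sym2.mem_mk_right u v, hx⟩
  have hinj : Function.Injective (Subtype.val : M.edgeSet → Sym2 V) := Subtype.val_injective
  have hdeg : @SimpleGraph.degree _ (M.lineGraph) ⟨s(u,v), he⟩ iN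
      = ((M.incidenceFinset u ∪ M.incidenceFinset v).erase s(u,v)).card := by
    rw [← himg, Finset.card_image_of_injective _ hinj]
    rw [← SimpleGraph.card_neighborFinset_eq_degree]
  have hintr : M.incidenceFinset u ∩ M.incidenceFinset v = {s(u,v)} := by
    ext g
    simp only [Finset.mem_inter, SimpleGraph.mem_incidenceFinset, Finset.mem_singleton]
    rw [← Set.mem_inter_iff, M.incidenceSet_inter_incidenceSet_of_adj hadj]
    simp
  have hmemu : s(u,v) ∈ M.incidenceFinset u := by
    rw [SimpleGraph.mem_incidenceFinset]
    exact M.mk'_mem_incidenceSet_left_iff.mpr hadj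
  have hcardu : (M.incidenceFinset u).card = M.degree u := by simp
  have hcardv : (M.incidenceFinset v).card = M.degree v := by simp
  have hunion : (M.incidenceFinset u ∪ M.incidenceFinset v).card
      = M.degree u + M.degree v - 1 := by
    have h2 := Finset.card_union_add_card_inter (M.incidenceFinset u) (M.incidenceFinset v)
    rw [hintr, Finset.card_singleton, hcardu, hcardv] at h2
    omega
  rw [hdeg, Finset.card_erase_of_mem (Finset.mem_union_left _ hmemu), hunion]
  omega

lemma lg_deg {V : Type*} [Fintype V] (M : SimpleGraph V) {u v : V}
    (he : s(u,v) ∈ M.edgeSet) :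
    deg M.lineGraph ⟨s(u,v), he⟩ = deg M u + deg M v - 2 := by
  classical
  rw [← deg_spec M.lineGraph ⟨s(u,v), he⟩ inferInstance, ← deg_spec M u inferInstance,
    ← deg_spec M v inferInstance]
  exact lg_degree M he _

lemma share_struct {V : Type*} [Fintype V] (M : SimpleGraph V) {e f : M.edgeSet}
    (h : (M.lineGraph).Adj e f) :
    ∃ (x p q : V) (hxp : s(x,p) ∈ M.edgeSet) (hxq : s(x,q) ∈ M.edgeSet),
      e = ⟨s(x,p), hxp⟩ ∧ f = ⟨s(x,q), hxq⟩ ∧ 2 ≤ deg M x := by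
  classical
  rw [SimpleGraph.lineGraph_adj_iff_exists] at h
  obtain ⟨hne', x, hx1, hx2⟩ := h
  obtain ⟨p, hep⟩ := Sym2.mem_iff_exists.mp hx1
  obtain ⟨q, hfq⟩ := Sym2.mem_iff_exists.mp hx2
  have hxp : s(x,p) ∈ M.edgeSet := hep ▸ e.2
  have hxq : s(x,q) ∈ M.edgeSet := hfq ▸ f.2
  refine ⟨x, p, q, hxp, hxq, Subtype.ext hep, Subtype.ext hfq, ?_⟩
  have hval : (e : Sym2 V) ≠ (f : Sym2 V) := fun hh => hne' (Subtype.ext hh)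
  have hsub : ({(e : Sym2 V), (f : Sym2 V)} : Finset (Sym2 V)) ⊆ M.incidenceFinset x := by
    intro z hz
    rw [Finset.mem_insert, Finset.mem_singleton] at hz
    rw [SimpleGraph.mem_incidenceFinset]
    rcases hz with rfl | rfl
    · exact M.edge_mem_incidenceSet_iff.mpr hx1
    · exact M.edge_mem_incidenceSet_iff.mpr hx2
  have hcard : 2 ≤ (M.incidenceFinset x).card := by
    calc 2 = ({(e : Sym2 V), (f : Sym2 V)} : Finset (Sym2 V)).card := (Finset.card_pair hval).symm
    _ ≤ _ := Finset.card_le_card hsub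
  rw [M.card_incidenceFinset_eq_degree, deg_spec] at hcard
  exact hcard

/-- If `M` is a connected molecular graph (maximum degree at most `4`)
with at least `3` vertices and `G` is the line graph of `M`, then `GA(G) > ABC(G)`. -/
theorem stmt_1 {V : Type*} [Fintype V] (M : SimpleGraph V)
    (hconn : M.Connected) (hn : 3 ≤ Fintype.card V)
    (hmol : ∀ v : V, deg M v ≤ 4) :
    ABC M.lineGraph < GA M.lineGraph := by
  classical
  -- a vertex of degree at least 2
  have hbig : ∃ u : V, 2 ≤ M.degree u := by
    by_contra hall
    push_neg at hall
    have hreach : ∀ {a b : V} (_w : M.Walk a b), a = b ∨ M.Adj a b := by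
      intro a b w
      induction w with
      | nil => exact Or.inl rfl
      | @cons a' x b' h p ih =>
        rcases ih with rfl | hxv
        · exact Or.inr h
        · left
          have hcard : (M.neighborFinset x).card ≤ 1 := by
            have := hall x
            rw [← SimpleGraph.card_neighborFinset_eq_degree] at this
            omega
          exact Finset.card_le_one.mp hcard _
            (by rw [SimpleGraph.mem_neighborFinset]; exact h.symm) _
            (by rw [SimpleGraph.mem_neighborFinset]; exact hxv)
    -- three distinct vertices
    obtain ⟨a, -, b, -, hab⟩ := Finset.one_lt_card.mp
      (show 1 < (Finset.univ : Finset V).card by rw [Finset.card_univ]; omega)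
    have hcard2 : 1 ≤ (((Finset.univ : Finset V).erase a).erase b).card := by
      rw [Finset.card_erase_of_mem (Finset.mem_erase.mpr ⟨hab.symm, Finset.mem_univ b⟩),
        Finset.card_erase_of_mem (Finset.mem_univ a), Finset.card_univ]
      omega
    obtain ⟨c, hc⟩ := Finset.card_pos.mp (show 0 < (((Finset.univ : Finset V).erase a).erase b).card by omega)
    rw [Finset.mem_erase, Finset.mem_erase] at hc
    obtain ⟨hcb, hca, -⟩ := hc
    -- a is adjacent to both b and c
    obtain ⟨w1⟩ := hconn.preconnected a b
    obtain ⟨w2⟩ := hconn.preconnected a c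
    have hadjb : M.Adj a b := by rcases hreach w1 with rfl | h; exact absurd rfl hab; exact h
    have hadjc : M.Adj a c := by
      rcases hreach w2 with rfl | h
      · exact absurd rfl (Ne.symm hca)
      · exact h
    have : 2 ≤ M.degree a := by
      rw [← SimpleGraph.card_neighborFinset_eq_degree, ← Finset.card_pair (show b ≠ c from fun h => hcb h.symm)]
      refine Finset.card_le_card ?_
      intro z hz
      rw [Finset.mem_insert, Finset.mem_singleton] at hz
      rw [SimpleGraph.mem_neighborFinset]
      rcases hz with rfl | rfl
      · exact hadjb
      · exact hadjc
    have := hall a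
    omega
  obtain ⟨u, hu2⟩ := hbig
  rw [← SimpleGraph.card_neighborFinset_eq_degree] at hu2
  obtain ⟨a, ha, b, hb, hab⟩ := Finset.one_lt_card.mp (show 1 < (M.neighborFinset u).card by omega)
  rw [SimpleGraph.mem_neighborFinset] at ha hb
  have hea : s(u,a) ∈ M.edgeSet := M.mem_edgeSet.mpr ha
  have heb : s(u,b) ∈ M.edgeSet := M.mem_edgeSet.mpr hb
  -- apply the key lemma
  refine key M.lineGraph ?_ ?_ ?_ ?_
  · -- nonempty edge set of the line graph
    refine ⟨⟨s(u,a), hea⟩, ⟨s(u,b), heb⟩, ?_⟩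
    rw [SimpleGraph.lineGraph_adj_iff_exists]
    exact ⟨fun h => hab (Sym2.congr_right.mp (congrArg Subtype.val h)),
      u, Sym2.mem_mk_left u a, Sym2.mem_mk_left u b⟩
  · -- degrees at most 6
    rintro ⟨e, he⟩
    induction e using Sym2.ind with
    | _ x y =>
      rw [lg_deg M he]
      have h1 := hmol x
      have h2 := hmol y
      omega
  · -- pendant vertices have neighbors of degree at most 4
    intro e f hadj hde1
    obtain ⟨x, p, q, hxp, hxq, rfl, rfl, hx2⟩ := share_struct M hadj
    rw [lg_deg M hxp] at hde1
    rw [lg_deg M hxq]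
    have hp1 : 1 ≤ deg M p := deg_pos (M.mem_edgeSet.mp hxp).symm
    have hq4 : deg M q ≤ 4 := hmol q
    omega
  · -- second neighbors of pendant-degree-4 pairs have degree at least 3
    intro e f g hadj hde1 hdf4 hadj2 hge
    obtain ⟨x, p, q, hxp, hxq, rfl, rfl, hx2⟩ := share_struct M hadj
    obtain ⟨y, q', r, hyq, hyr, hfeq, rfl, hy2⟩ := share_struct M hadj2
    rw [lg_deg M hxp] at hde1
    rw [lg_deg M hxq] at hdf4
    rw [lg_deg M hyr]
    have hp1 : 1 ≤ deg M p := deg_pos (M.mem_edgeSet.mp hxp).symm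
    have hq1 : 1 ≤ deg M q := deg_pos (M.mem_edgeSet.mp hxq).symm
    have hr1 : 1 ≤ deg M r := deg_pos (M.mem_edgeSet.mp hyr).symm
    have hx2' : deg M x = 2 := by omega
    have hq4 : deg M q = 4 := by omega
    -- y ∈ s(x,q)
    have hval : s(x,q) = s(y,q') := congrArg Subtype.val hfeq
    have hymem : y ∈ s(x,q) := by rw [hval]; exact Sym2.mem_mk_left y q'
    rcases Sym2.mem_iff.mp hymem with rfl | rfl
    · -- y = x : three distinct edges at x, contradiction
      exfalso
      have hd1 : ((⟨s(y,p), hxp⟩ : M.edgeSet) : Sym2 V) ≠ (⟨s(y,q), hxq⟩ : M.edgeSet) :=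
        fun h => hadj.ne (Subtype.ext h)
      have hd2 : ((⟨s(y,q), hxq⟩ : M.edgeSet) : Sym2 V) ≠ (⟨s(y,r), hyr⟩ : M.edgeSet) :=
        fun h => hadj2.ne (Subtype.ext h)
      have hd3 : ((⟨s(y,p), hxp⟩ : M.edgeSet) : Sym2 V) ≠ (⟨s(y,r), hyr⟩ : M.edgeSet) :=
        fun h => hge (Subtype.ext h.symm)
      have hsub : ({s(y,p), s(y,q), s(y,r)} : Finset (Sym2 V)) ⊆ M.incidenceFinset y := by
        intro z hz
        rw [Finset.mem_insert, Finset.mem_insert, Finset.mem_singleton] at hz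
        rw [SimpleGraph.mem_incidenceFinset]
        rcases hz with rfl | rfl | rfl
        · exact ⟨hxp, Sym2.mem_mk_left y p⟩
        · exact ⟨hxq, Sym2.mem_mk_left y q⟩
        · exact ⟨hyr, Sym2.mem_mk_left y r⟩
      have hcard3 : ({s(y,p), s(y,q), s(y,r)} : Finset (Sym2 V)).card = 3 :=
        Finset.card_eq_three.mpr ⟨_, _, _, hd1, hd3, hd2, rfl⟩
      have : 3 ≤ (M.incidenceFinset y).card := hcard3 ▸ Finset.card_le_card hsub
      rw [M.card_incidenceFinset_eq_degree, deg_spec] at this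
      omega
    · -- y = q
      omega
end

section
/- Let M be a connected simple graph with at least 5 vertices and let G be the line graph of M. Then no two pendant edges of G are adjacent; that is, no vertex of G is adjacent to two distinct vertices of degree one. -/
open SimpleGraph

lemma deg_eq_ncard {V : Type*} [Finite V] (G : SimpleGraph V) (v : V) :
    deg G v = (G.neighborSet v).ncard := by
  classical
  have : Fintype V := Fintype.ofFinite V
  unfold deg
  dsimp only
  rw [← SimpleGraph.card_neighborSet_eq_degree, ← Nat.card_coe_set_eq,
    Nat.card_eq_fintype_card]
  congr 1
  exact Subsingleton.elim _ _

lemma walk_closed {V : Type*} {M : SimpleGraph V} (S : Set V)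
    (h : ∀ x y, x ∈ S → M.Adj x y → y ∈ S) :
    ∀ {x y : V}, x ∈ S → M.Walk x y → y ∈ S := by
  intro x y hx p
  induction p with
  | nil => exact hx
  | cons h' _ ih => exact ih (h _ _ hx h')

/-- If `M` is a connected graph with at least `5` vertices and `G` is its
line graph, then no two pendant edges of `G` are adjacent: no vertex of `G` is adjacent to
two distinct vertices of degree one. -/
theorem stmt_2 {V : Type*} [Fintype V] (M : SimpleGraph V)
    (hconn : M.Connected) (hn : 5 ≤ Fintype.card V) :
    ∀ u v w : M.edgeSet, M.lineGraph.Adj u v → M.lineGraph.Adj u w → v ≠ w →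
      ¬(deg M.lineGraph v = 1 ∧ deg M.lineGraph w = 1) := by
  classical
  rintro u v w huv huw hvw ⟨hv1, hw1⟩
  -- unique neighbor lemmas
  have key : ∀ z : M.edgeSet, deg M.lineGraph z = 1 → M.lineGraph.Adj u z →
      ∀ e, M.lineGraph.Adj z e → e = u := by
    intro z hz hadj e he
    rw [deg_eq_ncard] at hz
    obtain ⟨f, hf⟩ := Set.ncard_eq_one.mp hz
    have h1 : u ∈ M.lineGraph.neighborSet z := hadj.symm
    have h2 : e ∈ M.lineGraph.neighborSet z := he
    rw [hf] at h1 h2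
    simp only [Set.mem_singleton_iff] at h1 h2
    rw [h1, ← h2]
  have hvonly := key v hv1 huv
  have hwonly := key w hw1 huw
  -- shared vertices
  obtain ⟨hne_uv, p, hpu, hpv⟩ := SimpleGraph.lineGraph_adj_iff_exists.mp huv
  obtain ⟨hne_uw, r, hru, hrw⟩ := SimpleGraph.lineGraph_adj_iff_exists.mp huw
  have hpr : p ≠ r := by
    rintro rfl
    have : M.lineGraph.Adj v w := SimpleGraph.lineGraph_adj_iff_exists.mpr ⟨hvw, p, hpv, hrw⟩
    exact hne_uw (hvonly w this).symm
  have huval : (u : Sym2 V) = s(p, r) := (Sym2.mem_and_mem_iff hpr).mp ⟨hpu, hru⟩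
  set S : Set V := {x | x ∈ (v : Sym2 V) ∨ x ∈ (w : Sym2 V)} with hS
  have hmemu : ∀ x, x ∈ (u : Sym2 V) → x ∈ S := by
    intro x hx
    rw [huval, Sym2.mem_iff] at hx
    rcases hx with rfl | rfl
    · exact Or.inl hpv
    · exact Or.inr hrw
  have hclosed : ∀ x y, x ∈ S → M.Adj x y → y ∈ S := by
    intro x y hx hxy
    set e : M.edgeSet := ⟨s(x, y), (SimpleGraph.mem_edgeSet M).mpr hxy⟩ with he
    have hye : y ∈ (e : Sym2 V) := Sym2.mem_mk_right x y
    rcases hx with hxv | hxw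
    · by_cases hev : e = v
      · exact Or.inl (hev ▸ hye)
      · have : M.lineGraph.Adj v e :=
          SimpleGraph.lineGraph_adj_iff_exists.mpr ⟨Ne.symm hev, x, hxv, Sym2.mem_mk_left x y⟩
        exact hmemu y ((hvonly e this) ▸ hye)
    · by_cases hew : e = w
      · exact Or.inr (hew ▸ hye)
      · have : M.lineGraph.Adj w e :=
          SimpleGraph.lineGraph_adj_iff_exists.mpr ⟨Ne.symm hew, x, hxw, Sym2.mem_mk_left x y⟩
        exact hmemu y ((hwonly e this) ▸ hye)
  have hall : ∀ x : V, x ∈ S := by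
    intro x
    obtain ⟨wk⟩ := hconn.preconnected p x
    exact walk_closed S hclosed (Or.inl hpv) wk
  -- bound the cardinality
  obtain ⟨a, b, hab⟩ : ∃ a b, (v : Sym2 V) = s(a, b) := by
    induction (v : Sym2 V) using Sym2.ind with
    | _ a b => exact ⟨a, b, rfl⟩
  obtain ⟨c, d, hcd⟩ : ∃ c d, (w : Sym2 V) = s(c, d) := by
    induction (w : Sym2 V) using Sym2.ind with
    | _ c d => exact ⟨c, d, rfl⟩
  have hsub : (Finset.univ : Finset V) ⊆ {a, b, c, d} := by
    intro x _
    have := hall x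
    rw [hS, Set.mem_setOf_eq, hab, hcd, Sym2.mem_iff, Sym2.mem_iff] at this
    simp only [Finset.mem_insert, Finset.mem_singleton]
    tauto
  have : Fintype.card V ≤ 4 := by
    calc Fintype.card V = (Finset.univ : Finset V).card := rfl
      _ ≤ ({a, b, c, d} : Finset V).card := Finset.card_le_card hsub
      _ ≤ 4 := by
        apply le_trans (Finset.card_insert_le _ _)
        apply Nat.succ_le_succ
        apply le_trans (Finset.card_insert_le _ _)
        apply Nat.succ_le_succ
        apply le_trans (Finset.card_insert_le _ _)
        simp
  omega
end

section
/- Let k ≥ 2 be a real number and define f(x,y) = (x+y)²x² − (x + y/2)²(2x + y − 2). Then f(x,y) > 0 for all real numbers x, y with k ≤ x ≤ k + (2k−1)² and 0 ≤ y ≤ (2k−1)². -/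
/-- For a real number `k ≥ 2`, the polynomial
`f(x,y) = (x+y)²x² − (x + y/2)²(2x + y − 2)` is positive for all
`k ≤ x ≤ k + (2k−1)²` and `0 ≤ y ≤ (2k−1)²`. -/
theorem stmt_3 (k x y : ℝ) (hk : 2 ≤ k)
    (hx₁ : k ≤ x) (hx₂ : x ≤ k + (2*k - 1)^2)
    (hy₁ : 0 ≤ y) (hy₂ : y ≤ (2*k - 1)^2) :
    0 < (x + y)^2 * x^2 - (x + y/2)^2 * (2*x + y - 2) := by
  have hx2 : 2 ≤ x := le_trans hk hx₁
  have hc : 0 ≤ (2*x - 1)^2 - y := by nlinarith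
  nlinarith [mul_nonneg hc (sq_nonneg ((2*x-1)^2 - y - (4*x^2 - 3*x + 1/2))),
    mul_nonneg hy₁ (by nlinarith : (0:ℝ) ≤ x^2 + x + 5/4),
    sq_nonneg x, mul_self_nonneg (x-2)]
end

section
/- Let a and b be integers with a, b ≥ 2 and |a − b| ≤ (2·min(a,b) − 1)². Then a²b² > (1/4)(a+b)²(a+b−2); equivalently, 2√(ab)/(a+b) > √((a+b−2)/(ab)). -/
lemma key_int (a b : ℤ) (ha : 2 ≤ a) (hab : a ≤ b) (h : b - a ≤ (2*a-1)^2) :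
    (a+b)^2*(a+b-2) < 4*(a^2*b^2) := by
  nlinarith [sq_nonneg (b - a), sq_nonneg (a*b - a - b),
    mul_pos (by linarith : (0:ℤ) < a) (by linarith : (0:ℤ) < b),
    sq_nonneg (a-2), sq_nonneg (b-2)]

lemma key_int' (a b : ℤ) (ha : 2 ≤ a) (hb : 2 ≤ b)
    (h : |a - b| ≤ (2 * min a b - 1)^2) :
    (a+b)^2*(a+b-2) < 4*(a^2*b^2) := by
  rcases le_total a b with hab | hab
  · rw [min_eq_left hab] at h
    exact key_int a b ha hab (by rw [abs_sub_comm] at h; rwa [abs_of_nonneg (by linarith)] at h)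
  · rw [min_eq_right hab] at h
    have := key_int b a hb hab (by rwa [abs_of_nonneg (by linarith)] at h)
    linarith [this]

/-- For integers `a, b ≥ 2` with `|a − b| ≤ (2·min(a,b) − 1)²` one has
`a²b² > (1/4)(a+b)²(a+b−2)`; equivalently, `2√(ab)/(a+b) > √((a+b−2)/(ab))`. -/
theorem stmt_4 (a b : ℤ) (ha : 2 ≤ a) (hb : 2 ≤ b)
    (h : |a - b| ≤ (2 * min a b - 1)^2) :
    (1/4 : ℝ) * ((a : ℝ) + b)^2 * ((a : ℝ) + b - 2) < (a : ℝ)^2 * (b : ℝ)^2 ∧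
    Real.sqrt (((a : ℝ) + b - 2) / ((a : ℝ) * b)) <
      2 * Real.sqrt ((a : ℝ) * b) / ((a : ℝ) + b) := by
  have key := key_int' a b ha hb h
  have hA : (2:ℝ) ≤ (a:ℝ) := by exact_mod_cast ha
  have hB : (2:ℝ) ≤ (b:ℝ) := by exact_mod_cast hb
  have keyR : ((a:ℝ)+b)^2*((a:ℝ)+b-2) < 4*((a:ℝ)^2*(b:ℝ)^2) := by exact_mod_cast key
  have hABpos : (0:ℝ) < (a:ℝ) * b := by nlinarith
  have hSpos : (0:ℝ) < (a:ℝ) + b := by linarith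
  refine ⟨by linarith, ?_⟩
  have hY : (0:ℝ) < 2 * Real.sqrt ((a:ℝ) * b) / ((a:ℝ) + b) :=
    div_pos (by positivity) hSpos
  rw [show Real.sqrt (((a:ℝ)+b-2) / ((a:ℝ)*b)) <
      2 * Real.sqrt ((a:ℝ)*b) / ((a:ℝ)+b) ↔
      ((a:ℝ)+b-2) / ((a:ℝ)*b) < (2 * Real.sqrt ((a:ℝ)*b) / ((a:ℝ)+b))^2 from
    Real.sqrt_lt' hY]
  have hsq : (2 * Real.sqrt ((a:ℝ)*b) / ((a:ℝ)+b))^2 = 4 * ((a:ℝ)*b) / ((a:ℝ)+b)^2 := by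
    rw [div_pow, mul_pow, Real.sq_sqrt hABpos.le]; ring
  rw [hsq, div_lt_div_iff₀ hABpos (by positivity)]
  nlinarith
end

section
/- Let G be a connected simple graph with maximum degree Δ and minimum degree δ ≥ 2. If Δ − δ ≤ (2δ − 1)², then GA(G) > ABC(G). -/
open SimpleGraph

lemma poly_key (d D x y : ℝ) (hd : 2 ≤ d) (hx1 : d ≤ x) (hy1 : d ≤ y)
    (hxD : x ≤ D) (hyD : y ≤ D) (hD : D ≤ d + (2*d-1)^2) :
    (x + y - 2) * (x + y)^2 < 4 * (x*y) * (x*y) := by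
  have step1 : ∀ a b : ℝ, d ≤ a → a ≤ b →
      4*d^2*b^2 - (d+b-2)*(d+b)^2 ≤ 4*a^2*b^2 - (a+b-2)*(a+b)^2 := by
    intro a b ha hab
    have hb : 0 ≤ 4*b^2*(a+d) - (a^2+a*d+d^2 + (3*b-2)*(a+d) + 3*b^2-4*b) := by
      nlinarith [sq_nonneg (b-a), sq_nonneg (b-d), mul_nonneg (by linarith : (0:ℝ) ≤ b) (by linarith : (0:ℝ) ≤ b - 2), sq_nonneg b]
    have h := mul_nonneg (sub_nonneg.2 ha) hb
    nlinarith [h]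
  have step2 : ∀ b : ℝ, d ≤ b → b ≤ d + (2*d-1)^2 →
      0 < 4*d^2*b^2 - (d+b-2)*(d+b)^2 := by
    intro b hb1 hb2
    nlinarith [mul_nonneg (sub_nonneg.2 hb1) (by nlinarith : (0:ℝ) ≤ d + (2*d-1)^2 - b), sq_nonneg (b-d), sq_nonneg (b - 2*d^2), mul_nonneg (mul_nonneg (sub_nonneg.2 hb1) (sub_nonneg.2 hb1)) (by nlinarith : (0:ℝ) ≤ d + (2*d-1)^2 - b)]
  rcases le_total x y with h | h
  · have := step1 x y hx1 h
    have := step2 y hy1 (le_trans hyD hD)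
    nlinarith
  · have := step1 y x hy1 h
    have := step2 x hx1 (le_trans hxD hD)
    nlinarith

lemma sqrt_key (d D x y : ℝ) (hd : 2 ≤ d) (hx1 : d ≤ x) (hy1 : d ≤ y)
    (hxD : x ≤ D) (hyD : y ≤ D) (hD : D ≤ d + (2*d-1)^2) :
    Real.sqrt ((x + y - 2) / (x * y)) < 2 * Real.sqrt (x*y) / (x+y) := by
  have hx : (0:ℝ) < x := by linarith
  have hy : (0:ℝ) < y := by linarith
  have hxy : (0:ℝ) < x * y := mul_pos hx hy
  have hs : (0:ℝ) < x + y := by linarith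
  have hrhs : 2 * Real.sqrt (x*y) / (x+y) = Real.sqrt (4*(x*y) / (x+y)^2) := by
    rw [Real.sqrt_div (by positivity) , Real.sqrt_sq hs.le,
      show (4:ℝ)*(x*y) = 2^2*(x*y) by ring, Real.sqrt_mul (by norm_num : (0:ℝ) ≤ 2^2) (x*y),
      Real.sqrt_sq (by norm_num : (0:ℝ) ≤ 2)]
  rw [hrhs]
  apply Real.sqrt_lt_sqrt (div_nonneg (by linarith) hxy.le)
  rw [div_lt_div_iff₀ hxy (by positivity)]
  exact poly_key d D x y hd hx1 hy1 hxD hyD hD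


lemma aux {V : Type*} [Fintype V] (G : SimpleGraph V) [DecidableRel G.Adj]
    [Fintype G.edgeSet]
    (hconn : G.Connected) (hδ : 2 ≤ G.minDegree)
    (hdeg : G.maxDegree ≤ G.minDegree + (2 * G.minDegree - 1)^2) :
    (∑ e ∈ G.edgeFinset,
      Sym2.lift ⟨fun u v =>
        Real.sqrt (((G.degree u : ℝ) + (G.degree v : ℝ) - 2) /
          ((G.degree u : ℝ) * (G.degree v : ℝ))),
        fun u v => by
          dsimp only; rw [mul_comm ((G.degree u : ℝ)), add_comm ((G.degree u : ℝ))]⟩ e)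
    < ∑ e ∈ G.edgeFinset,
      Sym2.lift ⟨fun u v =>
        2 * Real.sqrt ((G.degree u : ℝ) * (G.degree v : ℝ)) /
          ((G.degree u : ℝ) + (G.degree v : ℝ)),
        fun u v => by
          dsimp only; rw [mul_comm ((G.degree u : ℝ)), add_comm ((G.degree u : ℝ))]⟩ e := by
  have hV : Nonempty V := hconn.nonempty
  obtain ⟨v⟩ := hV
  have hdv : 0 < G.degree v := lt_of_lt_of_le (by norm_num) (le_trans hδ (G.minDegree_le_degree v))
  obtain ⟨w, hw⟩ := G.degree_pos_iff_exists_adj v |>.mp hdv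
  have hne : G.edgeFinset.Nonempty := ⟨s(v, w), by simpa [mem_edgeFinset] using hw⟩
  apply Finset.sum_lt_sum_of_nonempty hne
  intro e he
  induction e with
  | _ u u' =>
    simp only [Sym2.lift_mk]
    have hd2 : (2:ℝ) ≤ (G.minDegree : ℝ) := by exact_mod_cast hδ
    have hD : (G.maxDegree : ℝ) ≤ (G.minDegree : ℝ) + (2 * (G.minDegree : ℝ) - 1)^2 := by
      have h1 : 1 ≤ 2 * G.minDegree := by omega
      calc (G.maxDegree : ℝ) ≤ ((G.minDegree + (2 * G.minDegree - 1)^2 : ℕ) : ℝ) := by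
            exact_mod_cast hdeg
        _ = (G.minDegree : ℝ) + (2 * (G.minDegree : ℝ) - 1)^2 := by
            push_cast [Nat.cast_sub h1]; ring
    exact sqrt_key _ _ _ _ hd2
      (by exact_mod_cast G.minDegree_le_degree u)
      (by exact_mod_cast G.minDegree_le_degree u')
      (by exact_mod_cast G.degree_le_maxDegree u)
      (by exact_mod_cast G.degree_le_maxDegree u')
      hD


open SimpleGraph

/-- If `G` is a connected graph with minimum degree `δ ≥ 2` and
`Δ − δ ≤ (2δ − 1)²`, then `GA(G) > ABC(G)`. -/
theorem stmt_5 {V : Type*} [Fintype V] (G : SimpleGraph V)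
    (hconn : G.Connected) (hδ : 2 ≤ minDeg G)
    (hdeg : maxDeg G - minDeg G ≤ (2 * minDeg G - 1)^2) :
    ABC G < GA G := by
  classical
  have hinst : Fintype.ofFinite V = ‹Fintype V› := Subsingleton.elim _ _
  unfold ABC GA minDeg maxDeg at *
  rw [hinst] at hδ hdeg
  dsimp only at hδ hdeg
  simp only [hinst]
  convert aux G hconn hδ (by omega)
end

section
/- For every integer δ ≥ 2, the complete bipartite graph K_{r,s} with r = δ and s = (2δ−1)² + δ + 1 satisfies GA(K_{r,s}) < ABC(K_{r,s}); explicitly, 2[δ((2δ−1)² + δ + 1)]^{3/2} / ((2δ−1)² + 2δ + 1) < √(δ((2δ−1)² + 2δ − 1)((2δ−1)² + δ + 1)). In particular, the hypothesis Δ − δ ≤ (2δ−1)² cannot be weakened to Δ − δ ≤ (2δ−1)² + 1 in the theorem asserting GA(G) > ABC(G) for connected graphs with minimum degree δ ≥ 2. -/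
open SimpleGraph

section Aux
open Finset

lemma deg_inl (r s : ℕ) (a : Fin r)
    [Fintype ((completeBipartiteGraph (Fin r) (Fin s)).neighborSet (Sum.inl a))] :
    (completeBipartiteGraph (Fin r) (Fin s)).degree (Sum.inl a) = s := by
  rw [← SimpleGraph.card_neighborSet_eq_degree]
  have h : (completeBipartiteGraph (Fin r) (Fin s)).neighborSet (Sum.inl a) =
      Set.range (Sum.inr : Fin s → _) := by
    ext w; cases w <;> simp [SimpleGraph.neighborSet]
  rw [show Fintype.card ((completeBipartiteGraph (Fin r) (Fin s)).neighborSet (Sum.inl a)) =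
      Fintype.card (Set.range (Sum.inr : Fin s → _)) from Fintype.card_congr (Equiv.setCongr h)]
  rw [Set.card_range_of_injective Sum.inr_injective, Fintype.card_fin]

lemma deg_inr (r s : ℕ) (b : Fin s)
    [Fintype ((completeBipartiteGraph (Fin r) (Fin s)).neighborSet (Sum.inr b))] :
    (completeBipartiteGraph (Fin r) (Fin s)).degree (Sum.inr b) = r := by
  rw [← SimpleGraph.card_neighborSet_eq_degree]
  have h : (completeBipartiteGraph (Fin r) (Fin s)).neighborSet (Sum.inr b) =
      Set.range (Sum.inl : Fin r → _) := by
    ext w; cases w <;> simp [SimpleGraph.neighborSet]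
  rw [show Fintype.card ((completeBipartiteGraph (Fin r) (Fin s)).neighborSet (Sum.inr b)) =
      Fintype.card (Set.range (Sum.inl : Fin r → _)) from Fintype.card_congr (Equiv.setCongr h)]
  rw [Set.card_range_of_injective Sum.inl_injective, Fintype.card_fin]

lemma card_edges (r s : ℕ)
    [DecidableRel (completeBipartiteGraph (Fin r) (Fin s)).Adj] :
    (completeBipartiteGraph (Fin r) (Fin s)).edgeFinset.card = r * s := by
  have h := SimpleGraph.sum_degrees_eq_twice_card_edges
    (completeBipartiteGraph (Fin r) (Fin s))
  rw [Fintype.sum_sum_type] at h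
  simp only [deg_inl, deg_inr, Finset.sum_const, Finset.card_univ, Fintype.card_fin,
    smul_eq_mul] at h
  ring_nf at h
  omega

/-- lifted symmetric functions are constant on edges of the complete bipartite graph -/
lemma lift_const (r s : ℕ)
    (f : {f : (Fin r ⊕ Fin s) → (Fin r ⊕ Fin s) → ℝ // ∀ a b, f a b = f b a})
    (c : ℝ) (hf : ∀ (a : Fin r) (b : Fin s), f.1 (Sum.inl a) (Sum.inr b) = c)
    {instE : Fintype (completeBipartiteGraph (Fin r) (Fin s)).edgeSet}
    (e : Sym2 (Fin r ⊕ Fin s)) (he : e ∈ (completeBipartiteGraph (Fin r) (Fin s)).edgeFinset) :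
    Sym2.lift f e = c := by
  rw [SimpleGraph.edgeFinset, Set.mem_toFinset] at he
  induction e with
  | h u v =>
    rw [SimpleGraph.mem_edgeSet] at he
    rcases u with a | b <;> rcases v with a' | b'
    · simp [completeBipartiteGraph] at he
    · rw [Sym2.lift_mk]; exact hf a b'
    · rw [Sym2.lift_mk, f.2]; exact hf a' b
    · simp [completeBipartiteGraph] at he

/-- the explicit real inequality -/
lemma key_ineq (x : ℝ) (hx : 2 ≤ x) :
    2 * (x * ((2*x - 1)^2 + x + 1)) ^ ((3 : ℝ)/2) / ((2*x - 1)^2 + 2*x + 1) <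
      Real.sqrt (x * ((2*x - 1)^2 + 2*x - 1) * ((2*x - 1)^2 + x + 1)) := by
  have hx0 : (0:ℝ) < x := by linarith
  set s : ℝ := (2*x - 1)^2 + x + 1 with hs
  have hs0 : 0 < s := by positivity
  have hrs : 0 < x * s := by positivity
  have hA : (0:ℝ) < (2*x - 1)^2 + 2*x + 1 := by positivity
  have hpow : (x * s) ^ ((3 : ℝ)/2) = (x * s) * Real.sqrt (x * s) := by
    rw [show (3:ℝ)/2 = 1 + 1/2 by norm_num, Real.rpow_add hrs, Real.rpow_one,
      Real.sqrt_eq_rpow]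
  rw [hpow]
  have hL : 0 ≤ 2 * (x * s * Real.sqrt (x * s)) / ((2*x - 1)^2 + 2*x + 1) := by positivity
  rw [Real.lt_sqrt hL, div_pow, mul_pow, mul_pow, Real.sq_sqrt hrs.le,
    div_lt_iff₀ (by positivity)]
  have hdiff : 4 * (x*s)^2 < ((2*x - 1)^2 + 2*x - 1) * ((2*x - 1)^2 + 2*x + 1)^2 := by
    rw [hs]
    have h1 : 0 ≤ 12*x^3*(x-2) := by nlinarith
    have h2 : 0 < 16*x^2 - 8*x := by nlinarith
    nlinarith [h1, h2]
  nlinarith [mul_lt_mul_of_pos_right hdiff hrs]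

end Aux

lemma GA_bip (r s : ℕ) :
    GA (completeBipartiteGraph (Fin r) (Fin s))
      = (r * s : ℕ) * (2 * Real.sqrt ((s : ℝ) * (r : ℝ)) / ((s : ℝ) + (r : ℝ))) := by
  classical
  unfold GA
  refine Eq.trans (Finset.sum_congr
      (g := fun _ => 2 * Real.sqrt ((s : ℝ) * (r : ℝ)) / ((s : ℝ) + (r : ℝ))) rfl
      fun e he => lift_const r s _ _ ?_ e he) ?_
  · intro a b; dsimp only; rw [deg_inl, deg_inr]
  · rw [Finset.sum_const, nsmul_eq_mul]
    congr 2
    convert card_edges r s using 3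

lemma ABC_bip (r s : ℕ) :
    ABC (completeBipartiteGraph (Fin r) (Fin s))
      = (r * s : ℕ) * Real.sqrt (((s : ℝ) + (r : ℝ) - 2) / ((s : ℝ) * (r : ℝ))) := by
  classical
  unfold ABC
  refine Eq.trans (Finset.sum_congr
      (g := fun _ => Real.sqrt (((s : ℝ) + (r : ℝ) - 2) / ((s : ℝ) * (r : ℝ)))) rfl
      fun e he => lift_const r s _ _ ?_ e he) ?_
  · intro a b; dsimp only; rw [deg_inl, deg_inr]
  · rw [Finset.sum_const, nsmul_eq_mul]
    congr 2
    convert card_edges r s using 3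

/-- For every integer `δ ≥ 2`, the complete bipartite graph `K_{r,s}` with
`r = δ` and `s = (2δ−1)² + δ + 1` satisfies `GA(K_{r,s}) < ABC(K_{r,s})`; explicitly,
`2[δ((2δ−1)² + δ + 1)]^{3/2} / ((2δ−1)² + 2δ + 1) < √(δ((2δ−1)² + 2δ − 1)((2δ−1)² + δ + 1))`. -/
theorem stmt_6 (δ : ℕ) (hδ : 2 ≤ δ) :
    GA (completeBipartiteGraph (Fin δ) (Fin ((2*δ - 1)^2 + δ + 1))) <
      ABC (completeBipartiteGraph (Fin δ) (Fin ((2*δ - 1)^2 + δ + 1))) ∧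
    2 * ((δ : ℝ) * ((2*(δ : ℝ) - 1)^2 + δ + 1)) ^ ((3 : ℝ)/2) /
        ((2*(δ : ℝ) - 1)^2 + 2*δ + 1) <
      Real.sqrt ((δ : ℝ) * ((2*(δ : ℝ) - 1)^2 + 2*δ - 1) * ((2*(δ : ℝ) - 1)^2 + δ + 1)) := by
  have hδR : (2:ℝ) ≤ (δ:ℝ) := by exact_mod_cast hδ
  have key := key_ineq (δ:ℝ) hδR
  set sN : ℕ := (2*δ - 1)^2 + δ + 1 with hsN
  set R : ℝ := (δ : ℝ) with hR
  have hcast : ((2*δ - 1 : ℕ) : ℝ) = 2*R - 1 := by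
    have h2 : (1:ℕ) ≤ 2*δ := by omega
    push_cast [Nat.cast_sub h2]; ring
  have hsR : ((sN : ℕ) : ℝ) = (2*R - 1)^2 + R + 1 := by
    rw [hsN]; push_cast [hcast]; ring
  set S : ℝ := ((sN : ℕ) : ℝ) with hS
  have hR0 : (0:ℝ) < R := by linarith
  have hS0 : (0:ℝ) < S := by rw [hsR]; nlinarith
  have hSR2 : (0:ℝ) ≤ S + R - 2 := by rw [hsR]; nlinarith
  have hRS : (0:ℝ) < R * S := by positivity
  have hpow : (R * S) ^ ((3 : ℝ)/2) = (R * S) * Real.sqrt (R * S) := by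
    rw [show (3:ℝ)/2 = 1 + 1/2 by norm_num, Real.rpow_add hRS, Real.rpow_one,
      Real.sqrt_eq_rpow]
  have hGA : GA (completeBipartiteGraph (Fin δ) (Fin sN))
      = 2 * (R * S) ^ ((3 : ℝ)/2) / (R + S) := by
    rw [GA_bip, Nat.cast_mul, hpow, show Real.sqrt (S * R) = Real.sqrt (R * S) by
      rw [mul_comm], show S + R = R + S by ring]
    field_simp
    ring
  have hABC : ABC (completeBipartiteGraph (Fin δ) (Fin sN))
      = Real.sqrt (R * (R + S - 2) * S) := by
    rw [ABC_bip, Nat.cast_mul,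
      show R * (R + S - 2) * S = (S + R - 2) / (S * R) * (S * R)^2 by
        field_simp; ring,
      Real.sqrt_mul (by positivity) ((S*R)^2),
      Real.sqrt_sq (by positivity)]
    ring
  have hmain : 2 * (R * S) ^ ((3 : ℝ)/2) / (R + S) < Real.sqrt (R * (R + S - 2) * S) := by
    rw [hsR]
    have e1 : R + ((2*R - 1)^2 + R + 1) = (2*R - 1)^2 + 2*R + 1 := by ring
    rw [e1, show (2*R - 1)^2 + 2*R + 1 - 2 = (2*R - 1)^2 + 2*R - 1 by ring]
    exact key
  exact ⟨by rw [hGA, hABC]; exact hmain, key⟩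
end

section
/- Let G be a connected simple graph with minimum degree δ ≥ 2 such that |d_u − d_v| ≤ (2δ − 1)² for every edge uv of G. Then GA(G) > ABC(G). -/
open SimpleGraph

lemma real_key (a b : ℝ) (ha : 2 ≤ a) (hab : a ≤ b) (hb : b ≤ a + (2*a-1)^2) :
    Real.sqrt ((a + b - 2)/(a*b)) < 2 * Real.sqrt (a*b) / (a+b) := by
  have ha0 : (0:ℝ) < a := by linarith
  have hb0 : (0:ℝ) < b := by linarith
  have hs : (0:ℝ) < a + b := by linarith
  have h1 : (a+b-2)/(a*b) < 4*(a*b)/(a+b)^2 := by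
    rw [div_lt_div_iff₀ (by positivity) (by positivity)]
    nlinarith [sq_nonneg (b-a), sq_nonneg (a-2),
      mul_nonneg (sub_nonneg.2 hab) (sub_nonneg.2 hb), sq_nonneg (a*b - a - b),
      mul_pos ha0 hb0]
  calc Real.sqrt ((a+b-2)/(a*b)) < Real.sqrt (4*(a*b)/(a+b)^2) :=
        Real.sqrt_lt_sqrt (div_nonneg (by linarith) (by nlinarith)) h1
    _ = Real.sqrt (4*(a*b)) / Real.sqrt ((a+b)^2) := by
        rw [Real.sqrt_div (by nlinarith [mul_pos ha0 hb0] : (0:ℝ) ≤ 4*(a*b))]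
    _ = 2 * Real.sqrt (a*b) / (a+b) := by
        rw [show (4:ℝ)*(a*b) = 2^2*(a*b) by ring, Real.sqrt_mul (by positivity),
          Real.sqrt_sq (by norm_num), Real.sqrt_sq hs.le]

/-- If `G` is a connected graph with minimum degree `δ ≥ 2` such that
`|dᵤ − dᵥ| ≤ (2δ − 1)²` for every edge `uv` of `G`, then `GA(G) > ABC(G)`. -/
theorem stmt_7 {V : Type*} [Fintype V] (G : SimpleGraph V)
    (hconn : G.Connected) (hδ : 2 ≤ minDeg G)
    (h : ∀ u v : V, G.Adj u v →
      ((deg G u : ℤ) - (deg G v : ℤ)).natAbs ≤ (2 * minDeg G - 1)^2) :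
    ABC G < GA G := by
  classical
  have hdeg : ∀ v, deg G v = G.degree v := fun v => by unfold deg; congr!
  have hmin : minDeg G = G.minDegree := by unfold minDeg; congr!
  rw [hmin] at hδ
  simp only [hdeg, hmin] at h
  have hGA : GA G = ∑ e ∈ G.edgeFinset,
      Sym2.lift ⟨fun u v =>
        2 * Real.sqrt ((G.degree u : ℝ) * (G.degree v : ℝ)) /
          ((G.degree u : ℝ) + (G.degree v : ℝ)),
        fun u v => by
          dsimp only; rw [mul_comm ((G.degree u : ℝ)), add_comm ((G.degree u : ℝ))]⟩ e := by
    unfold GA; congr!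
  have hABC : ABC G = ∑ e ∈ G.edgeFinset,
      Sym2.lift ⟨fun u v =>
        Real.sqrt (((G.degree u : ℝ) + (G.degree v : ℝ) - 2) /
          ((G.degree u : ℝ) * (G.degree v : ℝ))),
        fun u v => by
          dsimp only; rw [mul_comm ((G.degree u : ℝ)), add_comm ((G.degree u : ℝ))]⟩ e := by
    unfold ABC; congr!
  rw [hGA, hABC]
  -- nonempty edge set
  have hV : Nonempty V := hconn.nonempty
  obtain ⟨v⟩ := hV
  have hdv : 0 < G.degree v := lt_of_lt_of_le (by omega) (G.minDegree_le_degree v)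
  obtain ⟨w, hw⟩ := (G.degree_pos_iff_exists_adj v).mp hdv
  have hne : G.edgeFinset.Nonempty := ⟨s(v, w), by rwa [mem_edgeFinset]⟩
  refine Finset.sum_lt_sum_of_nonempty hne ?_
  intro e he
  induction e using Sym2.ind with
  | _ u v =>
    rw [mem_edgeFinset] at he
    simp only [Sym2.lift_mk]
    have hu2 : 2 ≤ G.degree u := le_trans hδ (G.minDegree_le_degree u)
    have hv2 : 2 ≤ G.degree v := le_trans hδ (G.minDegree_le_degree v)
    have hd := h u v he
    set d := G.minDegree with hd'
    -- key: for nat degrees p ≤ q with q - p ≤ (2d-1)^2, d ≤ p: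
    have main : ∀ p q : ℕ, 2 ≤ p → p ≤ q → d ≤ p → (q : ℤ) - p ≤ ((2*d-1)^2 : ℕ) →
        Real.sqrt (((p:ℝ) + q - 2)/((p:ℝ)*q)) < 2 * Real.sqrt ((p:ℝ)*q) / ((p:ℝ)+q) := by
      intro p q hp hpq hdp hqd
      have hd2 : 2 ≤ d := hδ
      have hcast : ((2*d-1 : ℕ) : ℝ) = 2*(d:ℝ) - 1 := by
        have : 1 ≤ 2*d := by omega
        push_cast [this]; ring
      have hq : (q:ℝ) ≤ p + (2*(p:ℝ)-1)^2 := by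
        have h1 : (q:ℝ) ≤ p + ((2*d-1:ℕ):ℝ)^2 := by
          have : ((q:ℤ) : ℝ) - p ≤ (((2*d-1)^2 : ℕ) : ℤ) := by exact_mod_cast hqd
          push_cast at this ⊢; linarith
        have h2 : ((2*d-1:ℕ):ℝ)^2 ≤ (2*(p:ℝ)-1)^2 := by
          rw [hcast]
          have hdp' : (d:ℝ) ≤ p := by exact_mod_cast hdp
          have : (0:ℝ) ≤ 2*(d:ℝ)-1 := by
            have : (2:ℝ) ≤ d := by exact_mod_cast hd2
            linarith
          nlinarith
        linarith
      exact real_key p q (by exact_mod_cast hp) (by exact_mod_cast hpq) hq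
    rcases le_total (G.degree u) (G.degree v) with hle | hle
    · have := main (G.degree u) (G.degree v) hu2 hle (G.minDegree_le_degree u)
        (by omega)
      exact this
    · have := main (G.degree v) (G.degree u) hv2 hle (G.minDegree_le_degree v)
        (by omega)
      rw [mul_comm ((G.degree u : ℝ)), add_comm ((G.degree u : ℝ))]
      exact this
end

section
/- Let T be a tree with n ≥ 3 vertices such that no pendant vertex of T is adjacent to a vertex of degree b for any b ≥ 4 (i.e., m_{1,b}(T) = 0 for all b ≥ 4), and such that Δ − δ₁ ≤ (2δ₁ − 1)², where Δ is the maximum degree of T and δ₁ is the minimum degree among its non-pendant vertices. Then GA(T) > ABC(T). -/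
open SimpleGraph

/-- The minimum degree `δ₁` among the non-pendant vertices of a graph. -/
noncomputable def minNonPendantDeg {V : Type*} [Finite V] (G : SimpleGraph V) : ℕ :=
  sInf {d : ℕ | ∃ v : V, deg G v ≠ 1 ∧ deg G v = d}


section aux

lemma keyInt (a t : ℤ) (ha : 2 ≤ a) (ht : 0 ≤ t) (hb : t ≤ (2*a-1)^2) :
    (a+(a+t))^2*(a+(a+t)-2) < 4*(a*(a+t))^2 := by
  nlinarith [mul_le_mul_of_nonneg_left hb (mul_self_nonneg t),
    mul_le_mul_of_nonneg_left hb ht,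
    mul_nonneg ht (by linarith : (0:ℤ) ≤ a),
    mul_pos (mul_pos (by linarith : (0:ℤ) < a) (by linarith : (0:ℤ) < a))
      (by nlinarith : (0:ℤ) < a*a - 2*a + 2)]

lemma keyNat (a b : ℕ) (ha : 2 ≤ a) (hab : a ≤ b) (hb : b ≤ a + (2*a-1)^2) :
    (a+b)^2*(a+b-2) < 4*(a*b)^2 := by
  obtain ⟨t, rfl⟩ := Nat.exists_eq_add_of_le hab
  have ht : t ≤ (2*a-1)^2 := by omega
  zify [show (2:ℕ) ≤ a+(a+t) by omega, show (1:ℕ) ≤ 2*a by omega] at *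
  exact keyInt a t ha (by positivity) ht

lemma sqrtIneq (a b : ℝ) (ha : 1 ≤ a) (hb : 1 ≤ b)
    (h : (a+b)^2*(a+b-2) < 4*(a*b)^2) :
    Real.sqrt ((a+b-2)/(a*b)) < 2*Real.sqrt (a*b)/(a+b) := by
  have hab : 0 < a*b := by nlinarith
  have hs : 0 < a + b := by linarith
  have key : (a+b-2)/(a*b) < 4*(a*b)/(a+b)^2 := by
    rw [div_lt_div_iff₀ hab (by positivity)]
    nlinarith
  calc Real.sqrt ((a+b-2)/(a*b)) < Real.sqrt (4*(a*b)/(a+b)^2) :=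
        Real.sqrt_lt_sqrt (div_nonneg (by linarith) hab.le) key
    _ = 2*Real.sqrt (a*b)/(a+b) := by
        rw [Real.sqrt_div (by positivity), Real.sqrt_sq hs.le,
          Real.sqrt_mul (by norm_num), show Real.sqrt 4 = 2 by
            rw [show (4:ℝ)=2^2 by norm_num, Real.sqrt_sq (by norm_num)]]

lemma edgeIneq (a b : ℕ) (ha : 1 ≤ a) (hb : 1 ≤ b)
    (h : (a+b)^2*(a+b-2) < 4*(a*b)^2) :
    Real.sqrt (((a:ℝ)+(b:ℝ)-2)/((a:ℝ)*(b:ℝ))) < 2*Real.sqrt ((a:ℝ)*(b:ℝ))/((a:ℝ)+(b:ℝ)) := by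
  apply sqrtIneq _ _ (by exact_mod_cast ha) (by exact_mod_cast hb)
  have h2 : 2 ≤ a + b := by omega
  have := (Nat.cast_lt (α := ℝ)).mpr h
  push_cast [h2] at this
  convert this using 2

lemma degree_congr {V : Type*} (G : SimpleGraph V) (v : V)
    (i1 i2 : Fintype (G.neighborSet v)) :
    @SimpleGraph.degree V G v i1 = @SimpleGraph.degree V G v i2 := by
  rw [Subsingleton.elim i1 i2]

end aux

lemma deg_eq' {V : Type*} [Finite V] (G : SimpleGraph V) (v : V)
    (i : Fintype (G.neighborSet v)) : @SimpleGraph.degree V G v i = deg G v := by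
  unfold deg
  exact degree_congr G v _ _

lemma deg_le_maxDeg {V : Type*} [Finite V] (G : SimpleGraph V) (v : V) :
    deg G v ≤ maxDeg G := by
  unfold deg maxDeg
  classical
  letI : Fintype V := Fintype.ofFinite V
  exact SimpleGraph.degree_le_maxDegree G v

lemma no_double_pendant {V : Type*} [Fintype V] (G : SimpleGraph V)
    (hc : G.Connected) (hcard : 3 ≤ Fintype.card V) {u v : V} (h : G.Adj u v)
    (hu : deg G u = 1) (hv : deg G v = 1) : False := by
  classical
  rw [← deg_eq' G u inferInstance] at hu
  rw [← deg_eq' G v inferInstance] at hv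
  have hnu : G.neighborFinset u = {v} := by
    obtain ⟨a, ha⟩ := Finset.card_eq_one.mp (by rw [G.card_neighborFinset_eq_degree]; exact hu)
    have hvmem : v ∈ G.neighborFinset u := (SimpleGraph.mem_neighborFinset G u v).mpr h
    rw [ha] at hvmem ⊢
    rw [Finset.mem_singleton.mp hvmem]
  have hnv : G.neighborFinset v = {u} := by
    obtain ⟨a, ha⟩ := Finset.card_eq_one.mp (by rw [G.card_neighborFinset_eq_degree]; exact hv)
    have humem : u ∈ G.neighborFinset v := (SimpleGraph.mem_neighborFinset G v u).mpr h.symm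
    rw [ha] at humem ⊢
    rw [Finset.mem_singleton.mp humem]
  have step : ∀ x y : V, G.Adj x y → (x = u ∨ x = v) → (y = u ∨ y = v) := by
    rintro x y hxy (rfl | rfl)
    · right
      have : y ∈ G.neighborFinset x := (SimpleGraph.mem_neighborFinset G x y).mpr hxy
      rw [hnu] at this
      exact Finset.mem_singleton.mp this
    · left
      have : y ∈ G.neighborFinset x := (SimpleGraph.mem_neighborFinset G x y).mpr hxy
      rw [hnv] at this
      exact Finset.mem_singleton.mp this
  have hw : ∀ (x w : V), G.Walk x w → (x = u ∨ x = v) → (w = u ∨ w = v) := by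
    intro x w p
    induction p with
    | nil => exact id
    | cons hadj _ ih => intro hx; exact ih (step _ _ hadj hx)
  have hall : ∀ w : V, w = u ∨ w = v := fun w =>
    (hc.preconnected u w).elim fun p => hw u w p (Or.inl rfl)
  have hsub : (Finset.univ : Finset V) ⊆ {u, v} := by
    intro w _
    rcases hall w with rfl | rfl <;> simp
  have := Finset.card_le_card hsub
  have h2 : ({u, v} : Finset V).card ≤ 2 := Finset.card_insert_le u {v} |>.trans (by simp)
  rw [Finset.card_univ] at this
  omega

/-- Let `T` be a tree with `n ≥ 3` vertices in which no pendant vertex is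
adjacent to a vertex of degree `b` for any `b ≥ 4`, and with `Δ − δ₁ ≤ (2δ₁ − 1)²`, where
`δ₁` is the minimum non-pendant vertex degree. Then `GA(T) > ABC(T)`. -/
theorem stmt_10 {V : Type*} [Fintype V] (T : SimpleGraph V)
    (hT : T.IsTree) (hn : 3 ≤ Fintype.card V)
    (hpend : ∀ u v : V, T.Adj u v → deg T u = 1 → ∀ b : ℕ, 4 ≤ b → deg T v ≠ b)
    (hdeg : maxDeg T - minNonPendantDeg T ≤ (2 * minNonPendantDeg T - 1)^2) :
    ABC T < GA T := by
  classical
  have hconn : T.Connected := hT.isConnected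
  have hnt : Nontrivial V := Fintype.one_lt_card_iff_nontrivial.mp (by omega)
  have hne : T ≠ ⊥ := by
    intro h
    rw [h] at hconn
    exact SimpleGraph.not_connected_bot hconn
  have hpos : ∀ {u v : V}, T.Adj u v → 1 ≤ deg T u := by
    intro u v h
    rw [← deg_eq' T u inferInstance]
    exact (SimpleGraph.degree_pos_iff_exists_adj T u).mpr ⟨v, h⟩
  have hmin : ∀ v : V, deg T v ≠ 1 → minNonPendantDeg T ≤ deg T v := fun v hv =>
    Nat.sInf_le ⟨v, hv, rfl⟩
  -- key nat inequality per adjacent pair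
  have hkey : ∀ u v : V, T.Adj u v →
      (deg T u + deg T v)^2 * (deg T u + deg T v - 2) < 4 * (deg T u * deg T v)^2 := by
    intro u v huv
    have h1 : 1 ≤ deg T u := hpos huv
    have h2 : 1 ≤ deg T v := hpos huv.symm
    have main : ∀ a b : ℕ, 2 ≤ a → 2 ≤ b → minNonPendantDeg T ≤ a →
        minNonPendantDeg T ≤ b → b ≤ maxDeg T → a ≤ maxDeg T →
        (a + b)^2 * (a + b - 2) < 4 * (a * b)^2 := by
      intro a b ha hb hma hmb hbM haM
      set m := minNonPendantDeg T with hm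
      rcases le_total a b with hab | hab
      · apply keyNat a b ha hab
        have hmono : (2*m-1)^2 ≤ (2*a-1)^2 :=
          Nat.pow_le_pow_left (by omega) 2
        omega
      · have := keyNat b a hb hab (by
          have hmono : (2*m-1)^2 ≤ (2*b-1)^2 :=
            Nat.pow_le_pow_left (by omega) 2
          omega)
        calc (a+b)^2*(a+b-2) = (b+a)^2*(b+a-2) := by ring_nf
          _ < 4*(b*a)^2 := this
          _ = 4*(a*b)^2 := by ring
    by_cases hu1 : deg T u = 1
    · have hv1 : deg T v ≠ 1 := fun hv1 => no_double_pendant T hconn hn huv hu1 hv1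
      have hv4 : deg T v < 4 := by
        by_contra hc
        push_neg at hc
        exact hpend u v huv hu1 (deg T v) hc rfl
      have : deg T v = 2 ∨ deg T v = 3 := by omega
      rcases this with h | h <;> rw [hu1, h] <;> norm_num
    · by_cases hv1 : deg T v = 1
      · have hu4 : deg T u < 4 := by
          by_contra hc
          push_neg at hc
          exact hpend v u huv.symm hv1 (deg T u) hc rfl
        have : deg T u = 2 ∨ deg T u = 3 := by omega
        rcases this with h | h <;> rw [hv1, h] <;> norm_num
      · exact main _ _ (by omega) (by omega) (hmin u hu1) (hmin v hv1)
          (deg_le_maxDeg T v) (deg_le_maxDeg T u)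
  -- now the sums
  unfold ABC GA
  have hD : ∀ (w : V) (i : Fintype (T.neighborSet w)),
      @SimpleGraph.degree V T w i = deg T w := fun w i => deg_eq' T w i
  have hE : ∀ i : Fintype T.edgeSet, @SimpleGraph.edgeFinset V T i = T.edgeFinset :=
    fun i => by ext e; simp [SimpleGraph.mem_edgeFinset]
  simp only [hE]
  apply Finset.sum_lt_sum_of_nonempty
  · obtain ⟨e, he⟩ : T.edgeSet.Nonempty := (SimpleGraph.edgeSet_nonempty).mpr hne
    refine ⟨e, ?_⟩
    simpa using he
  · intro e he
    induction e using Sym2.ind with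
    | _ u v =>
      simp only [SimpleGraph.mem_edgeFinset, SimpleGraph.mem_edgeSet] at he
      have huv : T.Adj u v := he
      simp only [Sym2.lift_mk, hD]
      exact edgeIneq (deg T u) (deg T v) (hpos huv) (hpos huv.symm) (hkey u v huv)
end

section
/- Let S be a starlike tree, i.e., a tree with exactly one vertex v of degree greater than 2, and suppose every branch of S has length at least 4; equivalently, every leaf of S is at distance at least 4 from v. Then GA(S) > ABC(S). -/
open SimpleGraph

lemma aux_sqrt_half : Real.sqrt (1/2) = Real.sqrt 2 / 2 := by
  rw [show (1:ℝ)/2 = (Real.sqrt 2 / 2)^2 by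
    rw [div_pow, Real.sq_sqrt (by norm_num : (0:ℝ) ≤ 2)]; norm_num]
  exact Real.sqrt_sq (by positivity)

lemma aux_R_bound {x y : ℝ} (hx : x = 1 ∨ x = 2) (hy : y = 1 ∨ y = 2) :
    Real.sqrt 2 / 6 ≤ 2 * Real.sqrt (x*y)/(x+y) - Real.sqrt ((x+y-2)/(x*y)) := by
  have hs : Real.sqrt 2 ^ 2 = 2 := Real.sq_sqrt (by norm_num)
  have hs0 : 0 < Real.sqrt 2 := Real.sqrt_pos.mpr (by norm_num)
  have h4 : Real.sqrt 4 = 2 := by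
    rw [show (4:ℝ) = 2^2 by norm_num, Real.sqrt_sq (by norm_num : (0:ℝ) ≤ 2)]
  rcases hx with rfl | rfl <;> rcases hy with rfl | rfl
  · rw [show (1:ℝ)*1 = 1 by norm_num, show ((1:ℝ)+1-2)/1 = 0 by norm_num,
      Real.sqrt_one, Real.sqrt_zero, show (1:ℝ)+1 = 2 by norm_num]
    nlinarith
  · rw [show (1:ℝ)*2 = 2 by norm_num, show ((1:ℝ)+2-2)/2 = 1/2 by norm_num,
      aux_sqrt_half, show (1:ℝ)+2 = 3 by norm_num]
    linarith
  · rw [show (2:ℝ)*1 = 2 by norm_num, show ((2:ℝ)+1-2)/2 = 1/2 by norm_num,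
      aux_sqrt_half, show (2:ℝ)+1 = 3 by norm_num]
    linarith
  · rw [show (2:ℝ)*2 = 4 by norm_num, show ((2:ℝ)+2-2)/4 = 1/2 by norm_num,
      aux_sqrt_half, h4, show (2:ℝ)+2 = 4 by norm_num]
    nlinarith

lemma aux_C_eval {x : ℝ} (hx : 3 ≤ x) :
    Real.sqrt ((x+2-2)/(x*2)) = Real.sqrt 2 / 2 := by
  have hx0 : x ≠ 0 := by linarith
  rw [show (x+2-2)/(x*2) = 1/2 by field_simp; ring, aux_sqrt_half]

lemma aux_C_eval' {x : ℝ} (hx : 3 ≤ x) :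
    Real.sqrt ((2+x-2)/(2*x)) = Real.sqrt 2 / 2 := by
  rw [show (2+x-2)/(2*x) = (x+2-2)/(x*2) by ring_nf]
  exact aux_C_eval hx

section AuxTree

variable {V : Type*} [DecidableEq V] {G : SimpleGraph V}

lemma aux_dist_le_of_mem_support {a v x : V} (p : G.Walk a v) (hx : x ∈ p.support) :
    G.dist x v ≤ p.length :=
  (G.dist_le (p.dropUntil x hx)).trans (Walk.length_dropUntil_le p hx)

lemma aux_split {a v x : V} (p : G.Walk a v) (hx : x ∈ p.support) :
    (p.takeUntil x hx).length + (p.dropUntil x hx).length = p.length := by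
  have := congrArg Walk.length (p.take_spec hx)
  rwa [Walk.length_append] at this

lemma aux_dist_lt_of_mem_support {a v x : V} (p : G.Walk a v)
    (hp : p.length = G.dist a v) (hx : x ∈ p.support) (hxa : x ≠ a) :
    G.dist x v < G.dist a v := by
  have hsplit := aux_split p hx
  have hpos : 1 ≤ (p.takeUntil x hx).length := by
    rcases Nat.eq_zero_or_pos (p.takeUntil x hx).length with h | h
    · exact absurd (Walk.eq_of_length_eq_zero h).symm hxa
    · exact h
  have hd := G.dist_le (p.dropUntil x hx)
  omega

lemma aux_closer_unique (hT : G.IsTree) {v w a b : V}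
    (ha : G.Adj w a) (hb : G.Adj w b)
    (hda : G.dist a v + 1 = G.dist w v) (hdb : G.dist b v + 1 = G.dist w v) :
    a = b := by
  classical
  have hc := hT.isConnected
  obtain ⟨p, hp, hpl⟩ := (hc.preconnected a v).exists_path_of_dist
  obtain ⟨q, hq, hql⟩ := (hc.preconnected b v).exists_path_of_dist
  have hwp : w ∉ p.support := fun hw => by
    have := aux_dist_le_of_mem_support p hw; omega
  have hwq : w ∉ q.support := fun hw => by
    have := aux_dist_le_of_mem_support q hw; omega
  have hP : (Walk.cons ha p).IsPath := hp.cons hwp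
  have hQ : (Walk.cons hb q).IsPath := hq.cons hwq
  have heq : Walk.cons ha p = Walk.cons hb q := (hT.existsUnique_path w v).unique hP hQ
  have : (Walk.cons ha p).getVert 1 = (Walk.cons hb q).getVert 1 := by rw [heq]
  simpa [Walk.getVert_cons_succ] using this

lemma aux_adj_dist_ne (hT : G.IsTree) {v a b : V} (hab : G.Adj a b) :
    G.dist a v ≠ G.dist b v := by
  classical
  intro h
  have hc := hT.isConnected
  rcases Nat.eq_zero_or_pos (G.dist b v) with h0 | h0
  · have hav : a = v := (hc.dist_eq_zero_iff).mp (by omega)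
    have hbv : b = v := (hc.dist_eq_zero_iff).mp h0
    exact hab.ne (hav.trans hbv.symm)
  · obtain ⟨q, hq, hql⟩ := (hc.preconnected b v).exists_path_of_dist
    have haq : a ∉ q.support := fun hmem => by
      have := aux_dist_lt_of_mem_support q hql hmem hab.ne
      omega
    have hP : (Walk.cons hab q).IsPath := hq.cons haq
    obtain ⟨p, hp, hpl⟩ := (hc.preconnected a v).exists_path_of_dist
    have heq : p = Walk.cons hab q := (hT.existsUnique_path a v).unique hp hP
    have := congrArg Walk.length heq
    simp only [Walk.length_cons] at this
    omega

lemma aux_exists_closer (hc : G.Connected) {v u : V} (h : 1 ≤ G.dist u v) :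
    ∃ a, G.Adj u a ∧ G.dist a v + 1 = G.dist u v := by
  obtain ⟨p, hp, hpl⟩ := (hc.preconnected u v).exists_path_of_dist
  cases p with
  | nil => simp at hpl; rw [SimpleGraph.dist_self] at h; omega
  | @cons _ w _ hadj q =>
    refine ⟨w, hadj, ?_⟩
    simp only [Walk.length_cons] at hpl
    have h1 : G.dist w v ≤ q.length := G.dist_le q
    obtain ⟨r, hrl⟩ := (hc.preconnected w v).exists_walk_length_eq_dist
    have h2 : G.dist u v ≤ (Walk.cons hadj r).length := G.dist_le _
    simp only [Walk.length_cons] at h2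
    omega

lemma aux_dist_adj_le (hc : G.Connected) {a b : V} (h : G.Adj a b) (v : V) :
    G.dist a v ≤ G.dist b v + 1 := by
  obtain ⟨r, hrl⟩ := (hc.preconnected b v).exists_walk_length_eq_dist
  have := G.dist_le (Walk.cons h r)
  simp only [Walk.length_cons] at this
  omega

end AuxTree

noncomputable def ft (m n : ℕ) : ℝ :=
  2 * Real.sqrt ((m:ℝ)*(n:ℝ))/((m:ℝ)+(n:ℝ))
    - Real.sqrt (((m:ℝ)+(n:ℝ)-2)/((m:ℝ)*(n:ℝ)))

lemma ft_comm (m n : ℕ) : ft m n = ft n m := by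
  unfold ft
  rw [mul_comm ((m:ℝ)), add_comm ((m:ℝ))]

noncomputable def fedge {V : Type*} (d : V → ℕ) : Sym2 V → ℝ :=
  Sym2.lift ⟨fun a b => ft (d a) (d b), fun a b => ft_comm _ _⟩

lemma fedge_mk {V : Type*} (d : V → ℕ) (a b : V) : fedge d s(a,b) = ft (d a) (d b) := rfl

lemma ft_center {k : ℕ} (hk : 3 ≤ k) :
    ft k 2 = 2*Real.sqrt ((k:ℝ)*2)/((k:ℝ)+2) - Real.sqrt 2/2 := by
  unfold ft
  push_cast
  rw [aux_C_eval (by exact_mod_cast hk)]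

lemma ft_R_bound {m n : ℕ} (hm : m = 1 ∨ m = 2) (hn : n = 1 ∨ n = 2) :
    Real.sqrt 2 / 6 ≤ ft m n := by
  unfold ft
  apply aux_R_bound
  · rcases hm with h | h <;> rw [h] <;> norm_num
  · rcases hn with h | h <;> rw [h] <;> norm_num


/-- Let `S` be a starlike tree (a tree with exactly one vertex `v` of
degree greater than `2`) in which every branch has length at least `4`, i.e. every leaf is
at distance at least `4` from `v`. Then `GA(S) > ABC(S)`. -/
theorem stmt_11 {V : Type*} [Fintype V] (S : SimpleGraph V)
    (hS : S.IsTree) (v : V) (hv : 2 < deg S v)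
    (huniq : ∀ u : V, 2 < deg S u → u = v)
    (hbranch : ∀ u : V, deg S u = 1 → 4 ≤ S.dist u v) :
    ABC S < GA S := by
  classical
  have hdeg : ∀ u, deg S u = S.degree u := fun u => by unfold deg; congr!
  have hc := hS.isConnected
  simp only [hdeg] at hv huniq hbranch
  set k := S.degree v with hk
  -- every vertex other than v has degree ≤ 2
  have hnv : ∀ u, u ≠ v → S.degree u ≤ 2 := by
    intro u hu
    by_contra h
    exact hu (huniq u (by omega))
  -- every neighbor of v has degree exactly 2
  have hnbr : ∀ u, S.Adj v u → S.degree u = 2 := by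
    intro u hadj
    have h1 : S.dist u v = 1 := (SimpleGraph.dist_eq_one_iff_adj (G := S)).mpr hadj.symm
    have h2 : S.degree u ≤ 2 := hnv u hadj.ne'
    have h3 : 0 < S.degree u := (S.degree_pos_iff_exists_adj u).mpr ⟨v, hadj.symm⟩
    have h4 : S.degree u ≠ 1 := fun h => by have := hbranch u h; omega
    omega
  -- distance layers
  set D : ℕ → Finset V := fun j => Finset.univ.filter (fun u => S.dist u v = j) with hD
  have hD1 : k ≤ (D 1).card := by
    rw [hk, ← S.card_neighborFinset_eq_degree v]
    apply Finset.card_le_card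
    intro u hu
    rw [mem_neighborFinset] at hu
    simp only [hD, Finset.mem_filter, Finset.mem_univ, true_and]
    exact (SimpleGraph.dist_eq_one_iff_adj (G := S)).mpr hu.symm
  have hstep : ∀ j, 1 ≤ j → j ≤ 3 → (D j).card ≤ (D (j+1)).card := by
    intro j hj1 hj3
    have hmem : ∀ u ∈ D j, ∃ b, S.Adj u b ∧ S.dist b v = j + 1 := by
      intro u hu
      simp only [hD, Finset.mem_filter, Finset.mem_univ, true_and] at hu
      have hunv : u ≠ v := by
        intro h; rw [h, S.dist_self] at hu; omega
      obtain ⟨a, hadj, hda⟩ := aux_exists_closer hc (v := v) (u := u) (by omega)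
      have hdu2 : S.degree u = 2 := by
        have h2 : S.degree u ≤ 2 := hnv u hunv
        have h3 : 0 < S.degree u := (S.degree_pos_iff_exists_adj u).mpr ⟨a, hadj⟩
        have h4 : S.degree u ≠ 1 := fun h => by have := hbranch u h; omega
        omega
      have hcard2 : (S.neighborFinset u).card = 2 := hdu2
      have hamem : a ∈ S.neighborFinset u := by simpa using hadj
      have  : 0 < ((S.neighborFinset u).erase a).card := by
        rw [Finset.card_erase_of_mem hamem, hcard2]
        norm_num
      obtain ⟨b, hb⟩ := Finset.card_pos.mp this
      have hbne : b ≠ a := Finset.ne_of_mem_erase hb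
      have hbadj : S.Adj u b := by simpa using Finset.mem_of_mem_erase hb
      refine ⟨b, hbadj, ?_⟩
      have t1 : S.dist b v ≤ S.dist u v + 1 := aux_dist_adj_le hc hbadj.symm v
      have t2 : S.dist u v ≤ S.dist b v + 1 := aux_dist_adj_le hc hbadj v
      have t3 : S.dist b v ≠ S.dist u v := aux_adj_dist_ne hS hbadj.symm
      have t4 : ¬ (S.dist b v + 1 = S.dist u v) := by
        intro h
        exact hbne (aux_closer_unique hS hbadj hadj h (by omega))
      omega
    set f : V → V := fun u =>
      if h : ∃ b, S.Adj u b ∧ S.dist b v = j + 1 then h.choose else u with hf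
    apply Finset.card_le_card_of_injOn f
    · intro u hu
      have h := hmem u hu
      have hspec := h.choose_spec
      simp only [hD, Finset.mem_filter, Finset.mem_univ, true_and, hf, dif_pos h]
      simpa using hspec.2
    · intro u1 hu1 u2 hu2 heq
      have h1 := hmem u1 hu1
      have h2 := hmem u2 hu2
      have hs1 := h1.choose_spec
      have hs2 := h2.choose_spec
      simp only [hf, dif_pos h1, dif_pos h2] at heq
      simp only [hD, Finset.coe_filter, Set.mem_setOf_eq, Finset.mem_univ, true_and]
        at hu1 hu2
      exact aux_closer_unique hS (v := v) (w := h1.choose)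
        hs1.1.symm (by rw [heq]; exact hs2.1.symm) (by omega) (by omega)
  have hcardV : 4 * k + 1 ≤ Fintype.card V := by
    have hdisj : ∀ i ∈ Finset.range 5, ∀ l ∈ Finset.range 5, i ≠ l →
        Disjoint (D i) (D l) := by
      intro i _ l _ hil
      rw [Finset.disjoint_left]
      intro u hui hul
      simp only [hD, Finset.mem_filter] at hui hul
      exact hil (hui.2 ▸ hul.2 ▸ rfl)
    have hbi := Finset.card_biUnion hdisj
    have hsub : (Finset.range 5).biUnion D ⊆ Finset.univ := Finset.subset_univ _
    have hle : ∑ j ∈ Finset.range 5, (D j).card ≤ Fintype.card V := by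
      rw [← hbi]; exact Finset.card_le_card hsub
    have h0 : 1 ≤ (D 0).card := Finset.card_pos.mpr ⟨v, by
      simp [hD, S.dist_self]⟩
    have e12 : (D 1).card ≤ (D 2).card := hstep 1 (by norm_num) (by norm_num)
    have e23 : (D 2).card ≤ (D 3).card := hstep 2 (by norm_num) (by norm_num)
    have e34 : (D 3).card ≤ (D 4).card := hstep 3 (by norm_num) (by norm_num)
    have hsum : ∑ j ∈ Finset.range 5, (D j).card
        = (D 0).card + (D 1).card + (D 2).card + (D 3).card + (D 4).card := by
      rw [Finset.sum_range_succ, Finset.sum_range_succ, Finset.sum_range_succ,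
        Finset.sum_range_succ, Finset.sum_range_one]
    omega
  -- the sum part
  have hGA : GA S = ∑ e ∈ S.edgeFinset,
      Sym2.lift ⟨fun a b =>
        2 * Real.sqrt ((S.degree a : ℝ) * (S.degree b : ℝ)) /
          ((S.degree a : ℝ) + (S.degree b : ℝ)),
        fun a b => by
          dsimp only; rw [mul_comm ((S.degree a : ℝ)), add_comm ((S.degree a : ℝ))]⟩ e := by
    unfold GA; congr!
  have hABC : ABC S = ∑ e ∈ S.edgeFinset,
      Sym2.lift ⟨fun a b =>
        Real.sqrt (((S.degree a : ℝ) + (S.degree b : ℝ) - 2) /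
          ((S.degree a : ℝ) * (S.degree b : ℝ))),
        fun a b => by
          dsimp only; rw [mul_comm ((S.degree a : ℝ)), add_comm ((S.degree a : ℝ))]⟩ e := by
    unfold ABC; congr!
  have hsplit : GA S - ABC S = ∑ e ∈ S.edgeFinset, fedge (fun u => S.degree u) e := by
    rw [hGA, hABC, ← Finset.sum_sub_distrib]
    refine Finset.sum_congr rfl fun e _ => ?_
    induction e using Sym2.ind with
    | _ a b => simp [fedge, ft, Sym2.lift_mk]
  have hsum_split : ∑ e ∈ S.edgeFinset, fedge (fun u => S.degree u) e
      = ∑ e ∈ S.edgeFinset.filter (fun e => v ∈ e), fedge (fun u => S.degree u) e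
        + ∑ e ∈ S.edgeFinset.filter (fun e => ¬ v ∈ e), fedge (fun u => S.degree u) e :=
    (Finset.sum_filter_add_sum_filter_not S.edgeFinset (fun e => v ∈ e) _).symm
  rw [← sub_pos, hsplit, hsum_split]
  have hCcard : (S.edgeFinset.filter (fun e => v ∈ e)).card = k := by
    rw [← incidenceFinset_eq_filter, card_incidenceFinset_eq_degree]
  have hRcard : 3 * k ≤ (S.edgeFinset.filter (fun e => ¬ v ∈ e)).card := by
    have h1 := Finset.card_filter_add_card_filter_not
      (s := S.edgeFinset) (p := fun e => v ∈ e)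
    have h2 := hS.card_edgeFinset
    omega
  have hk3 : 3 ≤ k := hv
  have hk3r : (3:ℝ) ≤ (k:ℝ) := by exact_mod_cast hk3
  -- center edges all contribute ft k 2
  have hCconst : ∀ e ∈ S.edgeFinset.filter (fun e => v ∈ e),
      fedge (fun u => S.degree u) e = ft k 2 := by
    intro e
    induction e using Sym2.ind with
    | _ a b =>
      intro he
      rw [Finset.mem_filter, mem_edgeFinset, mem_edgeSet] at he
      obtain ⟨hadj, hmem⟩ := he
      rw [Sym2.mem_iff] at hmem
      simp only [fedge_mk]
      rcases hmem with rfl | rfl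
      · rw [hnbr b hadj, hk]
      · rw [hnbr a hadj.symm, ft_comm, hk]
  have hCsum : ∑ e ∈ S.edgeFinset.filter (fun e => v ∈ e),
      fedge (fun u => S.degree u) e = (k:ℝ) * ft k 2 := by
    rw [Finset.sum_congr rfl hCconst, Finset.sum_const, hCcard, nsmul_eq_mul]
  have hRconst : ∀ e ∈ S.edgeFinset.filter (fun e => ¬ v ∈ e),
      Real.sqrt 2/6 ≤ fedge (fun u => S.degree u) e := by
    intro e
    induction e using Sym2.ind with
    | _ a b =>
      intro he
      rw [Finset.mem_filter, mem_edgeFinset, mem_edgeSet] at he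
      obtain ⟨hadj, hmem⟩ := he
      rw [Sym2.mem_iff] at hmem
      push_neg at hmem
      obtain ⟨hva, hvb⟩ := hmem
      simp only [fedge_mk]
      refine ft_R_bound ?_ ?_
      · have h1 : 0 < S.degree a := (S.degree_pos_iff_exists_adj a).mpr ⟨b, hadj⟩
        have h2 := hnv a (Ne.symm hva)
        omega
      · have h1 : 0 < S.degree b := (S.degree_pos_iff_exists_adj b).mpr ⟨a, hadj.symm⟩
        have h2 := hnv b (Ne.symm hvb)
        omega
  have hRsum : ((S.edgeFinset.filter (fun e => ¬ v ∈ e)).card : ℝ) * (Real.sqrt 2/6)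
      ≤ ∑ e ∈ S.edgeFinset.filter (fun e => ¬ v ∈ e), fedge (fun u => S.degree u) e := by
    rw [← nsmul_eq_mul]
    exact Finset.card_nsmul_le_sum _ _ _ hRconst
  rw [hCsum, ft_center hk3]
  have hs2 : (0:ℝ) < Real.sqrt 2 := Real.sqrt_pos.mpr (by norm_num)
  have hg0 : (0:ℝ) < 2 * Real.sqrt ((k:ℝ)*2)/((k:ℝ)+2) := by
    apply div_pos
    · have : (0:ℝ) < Real.sqrt ((k:ℝ)*2) := Real.sqrt_pos.mpr (by nlinarith)
      linarith
    · linarith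
  have hRc : (3*k : ℝ) * (Real.sqrt 2/6)
      ≤ ((S.edgeFinset.filter (fun e => ¬ v ∈ e)).card : ℝ) * (Real.sqrt 2/6) := by
    apply mul_le_mul_of_nonneg_right _ (by positivity)
    exact_mod_cast hRcard
  have hkpos : (0:ℝ) < (k:ℝ) := by linarith
  have hid : (k:ℝ) * (2 * Real.sqrt ((k:ℝ)*2)/((k:ℝ)+2) - Real.sqrt 2/2)
      + (3*k : ℝ) * (Real.sqrt 2/6)
      = (k:ℝ) * (2 * Real.sqrt ((k:ℝ)*2)/((k:ℝ)+2)) := by ring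
  have hfin : (0:ℝ) < (k:ℝ) * (2 * Real.sqrt ((k:ℝ)*2)/((k:ℝ)+2)) := mul_pos hkpos hg0
  linarith
end

section
/- Let S be a starlike tree with branching vertex v of degree k > 2 and branch lengths r_1,…,r_k. If r_i ≥ 2 for all i (equivalently, no leaf of S is adjacent to v) and the average branch length (r_1 + ⋯ + r_k)/k is at least 4, then GA(S) > ABC(S). -/
open SimpleGraph

section auxStmt12

lemma walk_closed_aux12 {V : Type*} {G : SimpleGraph V} {T : Set V}
    (hT : ∀ a b, a ∈ T → G.Adj a b → b ∈ T) {a b : V} (p : G.Walk a b) (ha : a ∈ T) :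
    b ∈ T := by
  induction p with
  | nil => exact ha
  | cons h p ih => exact ih (hT _ _ ha h)

lemma deg_eq_aux12 {V : Type*} [Fintype V] (G : SimpleGraph V) (v : V)
    [Fintype (G.neighborSet v)] : deg G v = G.degree v := by
  unfold deg
  congr!

lemma GA_eq_aux12 {V : Type*} [Fintype V] (G : SimpleGraph V) [Fintype G.edgeSet]
    [∀ u : V, Fintype (G.neighborSet u)] :
    GA G = ∑ e ∈ G.edgeFinset,
    Sym2.lift ⟨fun u v =>
      2 * Real.sqrt ((G.degree u : ℝ) * (G.degree v : ℝ)) /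
        ((G.degree u : ℝ) + (G.degree v : ℝ)),
      fun u v => by
        dsimp only; rw [mul_comm ((G.degree u : ℝ)), add_comm ((G.degree u : ℝ))]⟩ e := by
  unfold GA
  congr!

lemma ABC_eq_aux12 {V : Type*} [Fintype V] (G : SimpleGraph V) [Fintype G.edgeSet]
    [∀ u : V, Fintype (G.neighborSet u)] :
    ABC G = ∑ e ∈ G.edgeFinset,
    Sym2.lift ⟨fun u v =>
      Real.sqrt (((G.degree u : ℝ) + (G.degree v : ℝ) - 2) /
        ((G.degree u : ℝ) * (G.degree v : ℝ))),
      fun u v => by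
        dsimp only; rw [mul_comm ((G.degree u : ℝ)), add_comm ((G.degree u : ℝ))]⟩ e := by
  unfold ABC
  congr!

end auxStmt12

/-- Let `S` be a starlike tree with branching vertex `v` of degree `k > 2`.
If every branch has length at least `2` (equivalently, no leaf of `S` is adjacent to `v`)
and the average branch length `(r₁ + ⋯ + r_k)/k = (|V(S)| − 1)/k` is at least `4`, then
`GA(S) > ABC(S)`. -/


theorem stmt_12 {V : Type*} [Fintype V] (S : SimpleGraph V)
    (hS : S.IsTree) (v : V) (hv : 2 < deg S v)
    (huniq : ∀ u : V, 2 < deg S u → u = v)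
    (hr : ∀ u : V, S.Adj v u → deg S u ≠ 1)
    (havg : (4 : ℝ) ≤ ((Fintype.card V : ℝ) - 1) / (deg S v : ℝ)) :
    ABC S < GA S := by
  
  classical
  open Finset in
  simp only [deg_eq_aux12] at hv huniq hr havg
  rw [GA_eq_aux12, ABC_eq_aux12]
  have hpre := hS.isConnected.preconnected

  have hne : Nonempty V := ⟨v⟩
  -- basic degree facts
  have hd1 : ∀ {a b : V}, S.Adj a b → 1 ≤ S.degree a := by
    intro a b h
    exact (S.degree_pos_iff_exists_adj a).mpr ⟨b, h⟩
  have hdle : ∀ u : V, u ≠ v → S.degree u ≤ 2 := by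
    intro u hu
    by_contra h
    exact hu (huniq u (by omega))
  have huniqnb : ∀ {a b c : V}, S.degree a = 1 → S.Adj a b → S.Adj a c → c = b := by
    intro a b c ha hb hc
    have h1 := Finset.card_le_one.mp
      (le_of_eq (by rw [S.card_neighborFinset_eq_degree, ha]))
    exact h1 c (by simpa) b (by simpa)
  have h11 : ∀ {a b : V}, S.Adj a b → S.degree a = 1 → S.degree b = 1 → False := by
    intro a b hab ha hb
    have hT : ∀ x y : V, x ∈ ({a, b} : Set V) → S.Adj x y → y ∈ ({a, b} : Set V) := by
      intro x y hx hxy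
      simp only [Set.mem_insert_iff, Set.mem_singleton_iff] at hx ⊢
      rcases hx with rfl | rfl
      · right; exact huniqnb ha hab hxy
      · left; exact huniqnb hb hab.symm hxy
    have hvmem : v ∈ ({a, b} : Set V) := walk_closed_aux12 hT ((hpre a v).some) (by left; rfl)
    simp only [Set.mem_insert_iff, Set.mem_singleton_iff] at hvmem
    rcases hvmem with rfl | rfl <;> omega
  -- every edge has an endpoint of degree 2
  have hcls : ∀ {a b : V}, S.Adj a b → S.degree a = 2 ∨ S.degree b = 2 := by
    intro a b hab
    by_cases hav : a = v
    · subst hav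
      have hbv : b ≠ a := (hab.ne).symm
      have := hdle b hbv
      have := hd1 hab.symm
      have := hr b hab
      omega
    · by_cases hbv : b = v
      · subst hbv
        have := hdle a hav
        have := hd1 hab
        have := hr a hab.symm
        omega
      · have ha2 := hdle a hav
        have hb2 := hdle b hbv
        have ha1 := hd1 hab
        have hb1 := hd1 hab.symm
        by_contra hcon
        push_neg at hcon
        exact h11 hab (by omega) (by omega)

  set fGA : Sym2 V → ℝ := Sym2.lift ⟨fun u w =>
      2 * Real.sqrt ((S.degree u : ℝ) * (S.degree w : ℝ)) /
        ((S.degree u : ℝ) + (S.degree w : ℝ)),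
      fun u w => by
        dsimp only; rw [mul_comm ((S.degree u : ℝ)), add_comm ((S.degree u : ℝ))]⟩
    with hfGA
  set fABC : Sym2 V → ℝ := Sym2.lift ⟨fun u w =>
      Real.sqrt (((S.degree u : ℝ) + (S.degree w : ℝ) - 2) /
        ((S.degree u : ℝ) * (S.degree w : ℝ))),
      fun u w => by
        dsimp only; rw [mul_comm ((S.degree u : ℝ)), add_comm ((S.degree u : ℝ))]⟩
    with hfABC
  set m := S.edgeFinset.card with hmdef
  have hm : m + 1 = Fintype.card V := hS.card_edgeFinset
  have hkm : 4 * S.degree v ≤ m := by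
    have hkpos : (0:ℝ) < (S.degree v : ℝ) := by
      have : (0:ℕ) < S.degree v := by omega
      exact_mod_cast this
    rw [le_div_iff₀ hkpos] at havg
    have hc1 : 1 ≤ Fintype.card V := Fintype.card_pos
    have hmr : (m : ℝ) = (Fintype.card V : ℝ) - 1 := by
      have := hm; push_cast [← this]; ring
    have : (4:ℝ) * (S.degree v : ℝ) ≤ (m : ℝ) := by rw [hmr]; linarith
    exact_mod_cast this
  -- ABC value
  have habcterm : ∀ e ∈ S.edgeFinset, fABC e = Real.sqrt (1/2) := by
    intro e
    induction e using Sym2.ind with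
    | _ u w =>
      intro he
      have hadj : S.Adj u w := by rwa [mem_edgeFinset, mem_edgeSet] at he
      have h1u : 1 ≤ S.degree u := hd1 hadj
      have h1w : 1 ≤ S.degree w := hd1 hadj.symm
      rw [hfABC, Sym2.lift_mk]
      dsimp only
      rcases hcls hadj with h2 | h2
      · rw [h2]
        have hw0 : (S.degree w : ℝ) ≠ 0 := by
          have : (0:ℕ) < S.degree w := h1w
          exact_mod_cast this.ne'
        congr 1
        push_cast
        field_simp
        try ring
      · rw [h2]
        have hu0 : (S.degree u : ℝ) ≠ 0 := by
          have : (0:ℕ) < S.degree u := h1u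
          exact_mod_cast this.ne'
        congr 1
        push_cast
        field_simp
        try ring
  have hABC : ∑ e ∈ S.edgeFinset, fABC e = (m : ℝ) * Real.sqrt (1/2) := by
    rw [Finset.sum_congr rfl habcterm, Finset.sum_const, nsmul_eq_mul]
  -- GA lower bounds
  have inc : S.incidenceFinset v ⊆ S.edgeFinset := by
    simp [incidenceFinset, incidenceSet_subset]
  have hGAsplit : ∑ e ∈ S.edgeFinset, fGA e
      = ∑ e ∈ S.edgeFinset \ S.incidenceFinset v, fGA e
        + ∑ e ∈ S.incidenceFinset v, fGA e := (Finset.sum_sdiff inc).symm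
  have hApos : 0 < ∑ e ∈ S.incidenceFinset v, fGA e := by
    apply Finset.sum_pos
    · intro e he
      have he' := inc he
      revert he'
      induction e using Sym2.ind with
      | _ u w =>
        intro he'
        have hadj : S.Adj u w := by rwa [mem_edgeFinset, mem_edgeSet] at he'
        have h1u : (1:ℝ) ≤ (S.degree u : ℝ) := by exact_mod_cast hd1 hadj
        have h1w : (1:ℝ) ≤ (S.degree w : ℝ) := by exact_mod_cast hd1 hadj.symm
        rw [hfGA, Sym2.lift_mk]
        dsimp only
        have hs : 0 < Real.sqrt ((S.degree u : ℝ) * (S.degree w : ℝ)) :=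
          Real.sqrt_pos.mpr (by nlinarith)
        apply div_pos (by linarith) (by linarith)
    · rw [← Finset.card_pos, S.card_incidenceFinset_eq_degree]
      omega
  have hBbound : ∀ e ∈ S.edgeFinset \ S.incidenceFinset v,
      2 * Real.sqrt 2 / 3 ≤ fGA e := by
    intro e
    induction e using Sym2.ind with
    | _ u w =>
      intro he
      rw [Finset.mem_sdiff] at he
      obtain ⟨heE, heA⟩ := he
      have hadj : S.Adj u w := by rwa [mem_edgeFinset, mem_edgeSet] at heE
      have hu : u ≠ v := by
        rintro rfl
        exact heA ((mem_incidenceFinset (G := S) _ _).mpr ⟨(S.mem_edgeSet.mpr hadj), Sym2.mem_mk_left _ _⟩)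
      have hw : w ≠ v := by
        rintro rfl
        exact heA ((mem_incidenceFinset (G := S) _ _).mpr ⟨(S.mem_edgeSet.mpr hadj), Sym2.mem_mk_right _ _⟩)
      have h1u := hd1 hadj
      have h1w := hd1 hadj.symm
      have h2u := hdle u hu
      have h2w := hdle w hw
      have hne11 : ¬(S.degree u = 1 ∧ S.degree w = 1) := fun ⟨a, b⟩ => h11 hadj a b
      have hcases : (S.degree u = 1 ∧ S.degree w = 2) ∨ (S.degree u = 2 ∧ S.degree w = 1)
          ∨ (S.degree u = 2 ∧ S.degree w = 2) := by omega
      have hs2 : Real.sqrt 2 ^ 2 = 2 := Real.sq_sqrt (by norm_num)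
      have hs2pos : 0 < Real.sqrt 2 := Real.sqrt_pos.mpr (by norm_num)
      rw [hfGA, Sym2.lift_mk]
      dsimp only
      rcases hcases with ⟨ha, hb⟩ | ⟨ha, hb⟩ | ⟨ha, hb⟩ <;> rw [ha, hb] <;> push_cast
      · rw [one_mul]; norm_num
      · rw [mul_one]; norm_num
      · rw [show ((2:ℝ) * 2) = 2^2 by norm_num, Real.sqrt_sq (by norm_num : (0:ℝ) ≤ 2)]
        nlinarith
  have hBsum : ((m - S.degree v : ℕ) : ℝ) * (2 * Real.sqrt 2 / 3)
      ≤ ∑ e ∈ S.edgeFinset \ S.incidenceFinset v, fGA e := by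
    have := Finset.card_nsmul_le_sum _ _ _ hBbound
    rwa [Finset.card_sdiff_of_subset inc, S.card_incidenceFinset_eq_degree, nsmul_eq_mul] at this
  -- final chain
  have hs2 : Real.sqrt 2 ^ 2 = 2 := Real.sq_sqrt (by norm_num)
  have hs2pos : 0 < Real.sqrt 2 := Real.sqrt_pos.mpr (by norm_num)
  have h12 : Real.sqrt (1/2) = Real.sqrt 2 / 2 := by
    rw [show (1/2 : ℝ) = (Real.sqrt 2 / 2)^2 by nlinarith]
    exact Real.sqrt_sq (by positivity)
  have hkmle : S.degree v ≤ m := by omega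
  have hcast : ((m - S.degree v : ℕ) : ℝ) = (m : ℝ) - (S.degree v : ℝ) := by
    rw [Nat.cast_sub hkmle]
  have hkmR : (4:ℝ) * (S.degree v : ℝ) ≤ (m : ℝ) := by exact_mod_cast hkm
  have hfinal : ∑ e ∈ S.edgeFinset, fABC e < ∑ e ∈ S.edgeFinset, fGA e := by
    rw [hABC, hGAsplit, h12]
    have hmid : (m:ℝ) * (Real.sqrt 2 / 2)
        ≤ ((m - S.degree v : ℕ) : ℝ) * (2 * Real.sqrt 2 / 3) := by
      rw [hcast]
      nlinarith
    linarith
  exact hfinal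
end
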